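/- arXiv:2301.01611 — 5 statements merged into one kernel-verified Lean document; each statement's English description precedes it below -/
import Mathlib

section
/- Let U ⊆ ℂ be a nonempty connected open set and let f : ℂ → ℂ be holomorphic on U with f'(z) ≠ 0 for all z ∈ U. If the Schwarzian derivative S(f)(z) = 0 for every z ∈ U, then f is the restriction to U of a Möbius transformation: there exist a, b, c, d ∈ ℂ with a·d − b·c ≠ 0 such that c·z + d ≠ 0 and f(z) = (a·z + b)/(c·z + d) for all z ∈ U. -/
open Filter Topology Metric Set

/-- Local uniqueness for the linear ODE `h' = q·h` with `h z₀ = 0`: an analytic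
solution vanishes near `z₀`. -/
lemma eventually_zero_of_deriv_eq_mul {h q : ℂ → ℂ} {z₀ : ℂ}
    (hh : AnalyticAt ℂ h z₀) (hq : ContinuousAt q z₀)
    (hode : ∀ᶠ z in 𝓝 z₀, deriv h z = q z * h z) (h0 : h z₀ = 0) :
    ∀ᶠ z in 𝓝 z₀, h z = 0 := by
  by_contra hne
  have hfin : analyticOrderAt h z₀ ≠ ⊤ := fun ht => hne (analyticOrderAt_eq_top.mp ht)
  obtain ⟨n, hn⟩ := WithTop.ne_top_iff_exists.mp hfin
  obtain ⟨g, hg, hgz, hev⟩ := (hh.analyticOrderAt_eq_natCast (n := n)).mp hn.symm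
  -- n ≠ 0
  obtain ⟨m, rfl⟩ : ∃ m, n = m + 1 := by
    refine Nat.exists_eq_succ_of_ne_zero ?_
    rintro rfl
    have := hev.self_of_nhds
    simp [h0, smul_eq_mul] at this
    exact hgz this.symm
  have hgd : ∀ᶠ z in 𝓝 z₀, AnalyticAt ℂ g z := hg.eventually_analyticAt
  have hder : deriv h =ᶠ[𝓝 z₀] deriv (fun w => (w - z₀) ^ (m + 1) • g w) :=
    Filter.EventuallyEq.deriv hev
  -- the key eventual identity on the punctured neighborhood
  have hkey : ∀ᶠ z in 𝓝[≠] z₀,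
      ((m : ℂ) + 1) * g z - (z - z₀) * (q z * g z - deriv g z) = 0 := by
    have hall : ∀ᶠ z in 𝓝 z₀,
        (z - z₀) ^ (m + 1) * (q z * g z) =
          (((m : ℂ) + 1) * (z - z₀) ^ m * 1) * g z + (z - z₀) ^ (m + 1) * deriv g z := by
      filter_upwards [hode, hev, hder, hgd] with z ho he hd hga
      have hD : HasDerivAt (fun w => (w - z₀) ^ (m + 1) • g w)
          ((((m : ℕ) + 1) * (z - z₀) ^ (m + 1 - 1) * 1) * g z +
            (z - z₀) ^ (m + 1) * deriv g z) z := by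
        simpa [smul_eq_mul] using
          ((((hasDerivAt_id z).sub_const z₀).fun_pow (m + 1)).fun_mul hga.differentiableAt.hasDerivAt)
      have : deriv h z = (((m : ℕ) + 1) * (z - z₀) ^ (m + 1 - 1) * 1) * g z +
          (z - z₀) ^ (m + 1) * deriv g z := by rw [hd, hD.deriv]
      rw [ho, he, smul_eq_mul] at this
      simp only [Nat.add_sub_cancel] at this
      linear_combination this
    filter_upwards [eventually_nhdsWithin_of_eventually_nhds hall, self_mem_nhdsWithin]
      with z hz hz'
    have hzne : z - z₀ ≠ 0 := sub_ne_zero.mpr hz'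
    have hpow : (z - z₀) ^ m ≠ 0 := pow_ne_zero _ hzne
    have : (z - z₀) ^ m * (((m : ℂ) + 1) * g z - (z - z₀) * (q z * g z - deriv g z)) = 0 := by
      rw [← sub_eq_zero] at hz ⊢
      ring_nf
      ring_nf at hz
      linear_combination -hz
    exact (mul_eq_zero.mp this).resolve_left hpow
  -- continuity gives the value at z₀
  obtain ⟨r, hr, hban⟩ := hg.exists_ball_analyticOnNhd
  have hdg : AnalyticAt ℂ (deriv g) z₀ :=
    (hban.deriv_of_isOpen isOpen_ball) z₀ (mem_ball_self hr)
  set φ : ℂ → ℂ := fun z => ((m : ℂ) + 1) * g z - (z - z₀) * (q z * g z - deriv g z) with hφ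
  have hφc : Tendsto φ (𝓝[≠] z₀) (𝓝 (φ z₀)) := by
    apply ContinuousWithinAt.tendsto
    apply ContinuousAt.continuousWithinAt
    exact (continuousAt_const.mul hg.continuousAt).sub
      (((continuousAt_id.sub continuousAt_const)).mul
        ((hq.mul hg.continuousAt).sub hdg.continuousAt))
  have hφ0 : Tendsto φ (𝓝[≠] z₀) (𝓝 0) :=
    Tendsto.congr' (EventuallyEq.symm hkey) tendsto_const_nhds
  have : φ z₀ = 0 := tendsto_nhds_unique hφc hφ0
  have : ((m : ℂ) + 1) * g z₀ = 0 := by simpa [hφ] using this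
  rcases mul_eq_zero.mp this with h1 | h2
  · exact Nat.cast_add_one_ne_zero m h1
  · exact hgz h2

/-- Constancy on a ball from vanishing complex derivative. -/
lemma const_on_ball_of_hasDerivAt_zero {v : ℂ → ℂ} {z₀ : ℂ} {ε : ℝ}
    (hv : ∀ z ∈ Metric.ball z₀ ε, HasDerivAt v 0 z) :
    ∀ z ∈ Metric.ball z₀ ε, v z = v z₀ := by
  intro z hz
  have hε : 0 < ε := pos_of_mem_ball hz
  refine (convex_ball z₀ ε).is_const_of_fderivWithin_eq_zero
    (fun w hw => (hv w hw).differentiableAt.differentiableWithinAt) ?_ hz (mem_ball_self hε)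
  intro w hw
  rw [fderivWithin_of_isOpen isOpen_ball hw]
  have h0 := (hv w hw).hasFDerivAt.fderiv
  rw [h0]
  ext1
  simp

/-- The Schwarzian derivative of `f` at `z`:
`S(f)(z) = f'''(z)/f'(z) - (3/2) * (f''(z)/f'(z))^2`. -/
noncomputable def schwarzian (f : ℂ → ℂ) (z : ℂ) : ℂ :=
  iteratedDeriv 3 f z / deriv f z - (3 / 2) * (iteratedDeriv 2 f z / deriv f z) ^ 2

/-- A holomorphic function with nonvanishing derivative and identically vanishing
Schwarzian derivative on a nonempty connected open set is the restriction of a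
Möbius transformation. -/
theorem moebius_of_schwarzian_eq_zero (U : Set ℂ) (hU : IsOpen U)
    (hUc : IsConnected U) (hUne : U.Nonempty)
    (f : ℂ → ℂ) (hf : DifferentiableOn ℂ f U) (hf' : ∀ z ∈ U, deriv f z ≠ 0)
    (hS : ∀ z ∈ U, schwarzian f z = 0) :
    ∃ a b c d : ℂ, a * d - b * c ≠ 0 ∧
      ∀ z ∈ U, c * z + d ≠ 0 ∧ f z = (a * z + b) / (c * z + d) := by
  obtain ⟨z₀, hz₀⟩ := hUne
  have hA : AnalyticOnNhd ℂ f U := hf.analyticOnNhd hU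
  have hA1 : AnalyticOnNhd ℂ (deriv f) U := hA.deriv
  have hA2 : AnalyticOnNhd ℂ (deriv (deriv f)) U := hA1.deriv
  set f1 : ℂ → ℂ := deriv f with hf1
  set f2 : ℂ → ℂ := deriv f1 with hf2
  set f3 : ℂ → ℂ := deriv f2 with hf3
  have hit2 : iteratedDeriv 2 f = f2 := by
    rw [iteratedDeriv_succ, iteratedDeriv_one]
  have hit3 : iteratedDeriv 3 f = f3 := by
    rw [iteratedDeriv_succ, hit2]
  -- the ODE satisfied by f3
  have hS3 : ∀ z ∈ U, 2 * f3 z * f1 z = 3 * f2 z ^ 2 := by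
    intro z hz
    have h := hS z hz
    unfold schwarzian at h
    rw [hit2, hit3, ← hf1, sub_eq_zero] at h
    have h1 : f1 z ≠ 0 := hf' z hz
    field_simp at h
    have h2 : f1 z * (2 * f3 z * f1 z - 3 * f2 z ^ 2) = 0 := by linear_combination f1 z * h
    have h3 := (mul_eq_zero.mp h2).resolve_left h1
    linear_combination h3
  -- g = f''/f' satisfies g' = g^2/2 on U
  set g : ℂ → ℂ := fun z => f2 z / f1 z with hgdef
  have hg_deriv : ∀ z ∈ U, HasDerivAt g (g z ^ 2 / 2) z := by
    intro z hz
    have h1 : f1 z ≠ 0 := hf' z hz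
    have hd2 : HasDerivAt f2 (f3 z) z := (hA2 z hz).differentiableAt.hasDerivAt
    have hd1 : HasDerivAt f1 (f2 z) z := (hA1 z hz).differentiableAt.hasDerivAt
    have hD : HasDerivAt g ((f3 z * f1 z - f2 z * f2 z) / f1 z ^ 2) z := hd2.div hd1 h1
    convert hD using 1
    have h3 := hS3 z hz
    rw [hgdef]
    field_simp
    linear_combination -h3
  have hgan : AnalyticAt ℂ g z₀ := by
    rw [hgdef]; exact (hA2 z₀ hz₀).div (hA1 z₀ hz₀) (hf' z₀ hz₀)
  clear_value g
  -- the Möbius coefficients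
  set c : ℂ := -(g z₀) / 2 with hc
  set d : ℂ := 1 + g z₀ / 2 * z₀ with hd
  set a : ℂ := f z₀ * c + f1 z₀ with ha
  set b : ℂ := f z₀ * d - f1 z₀ * z₀ with hb
  have hczd : c * z₀ + d = 1 := by rw [hc, hd]; ring
  have hdet : a * d - b * c = f1 z₀ := by rw [ha, hb, hc, hd]; ring
  have haz0 : a * z₀ + b = f z₀ := by rw [ha, hb, hc, hd]; ring
  have hcg : -2 * c = g z₀ := by rw [hc]; ring
  clear_value a b c d
  have hdet0 : a * d - b * c ≠ 0 := by rw [hdet]; exact hf' z₀ hz₀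
  set G : ℂ → ℂ := fun z => -2 * c / (c * z + d) with hGdef
  have hG_deriv : ∀ z, c * z + d ≠ 0 → HasDerivAt G (G z ^ 2 / 2) z := by
    intro z hz
    have hlin : HasDerivAt (fun w => c * w + d) c z := by
      simpa using ((hasDerivAt_id z).const_mul c).add_const d
    have hD : HasDerivAt G ((0 * (c * z + d) - -2 * c * c) / (c * z + d) ^ 2) z := by
      rw [hGdef]; exact (hasDerivAt_const z (-2 * c)).div hlin hz
    convert hD using 1
    rw [hGdef]
    field_simp
    ring
  have hGan : AnalyticAt ℂ G z₀ := by
    rw [hGdef]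
    exact analyticAt_const.div
      ((analyticAt_const.mul analyticAt_id).add analyticAt_const) (by rw [hczd]; norm_num)
  have hG0 : G z₀ = g z₀ := by rw [hGdef]; simp only [hczd, div_one]; exact hcg
  clear_value G
  -- the neighborhood W
  set W : Set ℂ := U ∩ {z | c * z + d ≠ 0} with hW
  have hWopen : IsOpen W := by
    apply hU.inter
    have hco : Continuous fun z : ℂ => c * z + d := by continuity
    exact isOpen_compl_singleton.preimage hco
  have hz₀W : z₀ ∈ W := ⟨hz₀, by show c * z₀ + d ≠ 0; rw [hczd]; norm_num⟩
  -- h = g - G satisfies the linear ODE h' = q h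
  set h : ℂ → ℂ := fun z => g z - G z with hhdef
  set q : ℂ → ℂ := fun z => (g z + G z) / 2 with hqdef
  have hode : ∀ᶠ z in 𝓝 z₀, deriv h z = q z * h z := by
    filter_upwards [hWopen.mem_nhds hz₀W] with z hz
    have hD : HasDerivAt h (g z ^ 2 / 2 - G z ^ 2 / 2) z := by
      rw [hhdef]; exact (hg_deriv z hz.1).sub (hG_deriv z hz.2)
    rw [hD.deriv, hqdef, hhdef]
    ring
  have hhan : AnalyticAt ℂ h z₀ := by rw [hhdef]; exact hgan.sub hGan
  have hqc : ContinuousAt q z₀ := by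
    rw [hqdef]; exact (hgan.continuousAt.add hGan.continuousAt).div_const 2
  have hh0 : h z₀ = 0 := by simp only [hhdef]; rw [hG0]; ring
  clear_value h q
  have hhz : ∀ᶠ z in 𝓝 z₀, h z = 0 :=
    eventually_zero_of_deriv_eq_mul hhan hqc hode hh0
  -- extract a ball
  obtain ⟨ε, hε, hball⟩ : ∃ ε > 0, ∀ z ∈ Metric.ball z₀ ε, z ∈ W ∧ h z = 0 := by
    have hmem := Filter.inter_mem (hWopen.mem_nhds hz₀W) hhz
    rcases Metric.mem_nhds_iff.mp hmem with ⟨ε, hε, hsub⟩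
    exact ⟨ε, hε, fun z hz => ⟨(hsub hz).1, (hsub hz).2⟩⟩
  -- v = f' · (cz+d)^2 is constant on the ball
  set v : ℂ → ℂ := fun z => f1 z * (c * z + d) ^ 2 with hvdef
  have hvconst : ∀ z ∈ Metric.ball z₀ ε, v z = v z₀ := by
    apply const_on_ball_of_hasDerivAt_zero
    intro z hz
    obtain ⟨⟨hzU, hzcd⟩, hzh⟩ := hball z hz
    have hzcd' : c * z + d ≠ 0 := hzcd
    have h1 : f1 z ≠ 0 := hf' z hzU
    have hd1 : HasDerivAt f1 (f2 z) z := (hA1 z hzU).differentiableAt.hasDerivAt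
    have hlin : HasDerivAt (fun w => (c * w + d) ^ 2) (2 * (c * z + d) ^ 1 * c) z := by
      exact (by simpa using ((hasDerivAt_id z).const_mul c).add_const d :
        HasDerivAt (fun w => c * w + d) c z).pow 2
    have hD : HasDerivAt v (f2 z * (c * z + d) ^ 2 + f1 z * (2 * (c * z + d) ^ 1 * c)) z := by
      rw [hvdef]; exact hd1.mul hlin
    convert hD using 1
    -- show the derivative is zero using g z = G z
    have hgz : g z = G z := by
      have hz0 := hzh
      simp only [hhdef] at hz0
      exact sub_eq_zero.mp hz0
    have hgz' : f2 z * (c * z + d) = -2 * c * f1 z := by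
      have h' := hgz
      simp only [hgdef, hGdef] at h'
      rw [div_eq_div_iff h1 hzcd'] at h'
      linear_combination h'
    rw [eq_comm]
    calc f2 z * (c * z + d) ^ 2 + f1 z * (2 * (c * z + d) ^ 1 * c)
        = (c * z + d) * (f2 z * (c * z + d)) + 2 * c * f1 z * (c * z + d) := by ring
      _ = 0 := by rw [hgz']; ring
  have hvz₀ : v z₀ = f1 z₀ := by rw [hvdef]; simp only [hczd]; ring
  clear_value v
  -- f equals the Möbius map on the ball
  have hfM : ∀ z ∈ Metric.ball z₀ ε, f z = (a * z + b) / (c * z + d) := by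
    set w : ℂ → ℂ := fun z => f z - (a * z + b) / (c * z + d) with hwdef
    have hwconst : ∀ z ∈ Metric.ball z₀ ε, w z = w z₀ := by
      apply const_on_ball_of_hasDerivAt_zero
      intro z hz
      obtain ⟨⟨hzU, hzcd⟩, hzh⟩ := hball z hz
      have hzcd' : c * z + d ≠ 0 := hzcd
      have hdf : HasDerivAt f (f1 z) z := (hA z hzU).differentiableAt.hasDerivAt
      have hnum : HasDerivAt (fun w => a * w + b) a z := by
        simpa using ((hasDerivAt_id z).const_mul a).add_const b
      have hden : HasDerivAt (fun w => c * w + d) c z := by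
        simpa using ((hasDerivAt_id z).const_mul c).add_const d
      have hM : HasDerivAt (fun w => (a * w + b) / (c * w + d))
          ((a * (c * z + d) - (a * z + b) * c) / (c * z + d) ^ 2) z := hnum.div hden hzcd'
      have hD : HasDerivAt w
          (f1 z - (a * (c * z + d) - (a * z + b) * c) / (c * z + d) ^ 2) z := by
        rw [hwdef]; exact hdf.sub hM
      convert hD using 1
      have hnum_eq : a * (c * z + d) - (a * z + b) * c = f1 z₀ := by
        rw [← hdet]; ring
      have hv := hvconst z hz
      rw [hvz₀, hvdef] at hv
      have hcd2 : (c * z + d) ^ 2 ≠ 0 := pow_ne_zero _ hzcd'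
      rw [hnum_eq, eq_comm, sub_eq_zero, eq_div_iff hcd2, ← hv]
    intro z hz
    have hwz := hwconst z hz
    have hwz₀ : w z₀ = 0 := by
      rw [hwdef]
      simp only [hczd, div_one, haz0]
      ring
    rw [hwz₀] at hwz
    simp only [hwdef] at hwz
    exact sub_eq_zero.mp hwz
  -- globalize via the identity theorem
  set F : ℂ → ℂ := fun z => f z * (c * z + d) - (a * z + b) with hFdef
  have hFan : AnalyticOnNhd ℂ F U := by
    rw [hFdef]
    intro z hz
    exact ((hA z hz).mul ((analyticAt_const.mul analyticAt_id).add analyticAt_const)).sub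
      ((analyticAt_const.mul analyticAt_id).add analyticAt_const)
  have hFev : F =ᶠ[𝓝 z₀] 0 := by
    filter_upwards [Metric.ball_mem_nhds z₀ hε] with z hz
    have hfz := hfM z hz
    obtain ⟨⟨hzU, hzcd⟩, _⟩ := hball z hz
    have hzcd' : c * z + d ≠ 0 := hzcd
    simp only [hFdef, Pi.zero_apply]
    rw [hfz, div_mul_cancel₀ _ hzcd']
    ring
  have hFU : Set.EqOn F 0 U :=
    hFan.eqOn_zero_of_preconnected_of_eventuallyEq_zero hUc.isPreconnected hz₀ hFev
  refine ⟨a, b, c, d, hdet0, fun z hz => ?_⟩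
  have hFz : f z * (c * z + d) - (a * z + b) = 0 := by
    have := hFU hz
    simpa [hFdef] using this
  have hcd : c * z + d ≠ 0 := by
    intro h0
    apply hdet0
    have hb' : a * z + b = 0 := by
      rw [h0, mul_zero, zero_sub, neg_eq_zero] at hFz
      exact hFz
    have : a * d - b * c = a * (c * z + d) - (a * z + b) * c := by ring
    rw [this, h0, hb']
    ring
  exact ⟨hcd, by rw [eq_div_iff hcd]; linear_combination hFz⟩
end

section
/- Let U ⊆ ℂ be a nonempty connected open set and let f, g : ℂ → ℂ be holomorphic on U with f'(z) ≠ 0 and g'(z) ≠ 0 for all z ∈ U. If S(f)(z) = S(g)(z) for every z ∈ U, then f and g differ by postcomposition with a Möbius transformation: there exist a, b, c, d ∈ ℂ with a·d − b·c ≠ 0 such that c·g(z) + d ≠ 0 and f(z) = (a·g(z) + b)/(c·g(z) + d) for all z ∈ U. -/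
open Filter Topology
set_option maxHeartbeats 1000000


lemma analyticAt_deriv' {f : ℂ → ℂ} {z : ℂ} (h : AnalyticAt ℂ f z) :
    AnalyticAt ℂ (deriv f) z := by
  obtain ⟨s, hs, hf⟩ := h.eventually_analyticAt.exists_mem
  exact AnalyticOnNhd.deriv (fun x hx => hf x hx) z (mem_of_mem_nhds hs)

lemma eventually_zero_of_ode {T u : ℂ → ℂ} {z₀ : ℂ}
    (hT : AnalyticAt ℂ T z₀) (hu : AnalyticAt ℂ u z₀) (h0 : T z₀ = 0)
    (hode : ∀ᶠ z in 𝓝 z₀, deriv T z = u z * T z) :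
    ∀ᶠ z in 𝓝 z₀, T z = 0 := by
  by_cases htop : analyticOrderAt T z₀ = ⊤
  · exact analyticOrderAt_eq_top.mp htop
  obtain ⟨n, hn⟩ := ENat.ne_top_iff_exists.mp htop
  obtain ⟨G, hG, hG0, hfz⟩ := (hT.analyticOrderAt_eq_natCast (n := n)).mp hn.symm
  exfalso
  -- n is positive
  obtain ⟨m, rfl⟩ : ∃ m, n = m + 1 := by
    rcases Nat.eq_zero_or_pos n with h | h
    · exfalso
      apply hG0
      have := hfz.self_of_nhds
      simp [h, h0] at this
      exact this.symm
    · exact ⟨n - 1, by omega⟩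
  -- the auxiliary continuous function
  set ψ : ℂ → ℂ := fun z => (m + 1 : ℂ) * G z + (z - z₀) * (deriv G z - u z * G z) with hψ
  have hGd : ∀ᶠ z in 𝓝 z₀, AnalyticAt ℂ G z := hG.eventually_analyticAt
  -- derivative of the normal form
  have hder : ∀ᶠ z in 𝓝 z₀, deriv T z =
      (m + 1 : ℂ) * (z - z₀) ^ m * G z + (z - z₀) ^ (m + 1) * deriv G z := by
    have hTG : T =ᶠ[𝓝 z₀] fun z => (z - z₀) ^ (m + 1) * G z := by
      filter_upwards [hfz] with z hz
      simpa using hz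
    filter_upwards [hTG.deriv.eventually_nhds.self_of_nhds.eventually_nhds, hGd] with z hz hGz
    have h1 : HasDerivAt (fun w => (w - z₀) ^ (m + 1)) ((m + 1 : ℂ) * (z - z₀) ^ m) z := by
      exact (((hasDerivAt_id z).sub_const z₀).pow (m + 1)).congr_deriv (by simp)
    have h2 : HasDerivAt (fun w => (w - z₀) ^ (m + 1) * G w)
        ((m + 1 : ℂ) * (z - z₀) ^ m * G z + (z - z₀) ^ (m + 1) * deriv G z) z :=
      h1.mul hGz.differentiableAt.hasDerivAt
    have := hz.self_of_nhds
    rw [this, h2.deriv]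
  have hpunct : ∀ᶠ z in 𝓝[≠] z₀, ψ z = 0 := by
    have : ∀ᶠ z in 𝓝 z₀, (z - z₀) ^ m * ψ z = 0 := by
      filter_upwards [hder, hode, hfz] with z h1 h2 h3
      have h3' : T z = (z - z₀) ^ (m + 1) * G z := by simpa using h3
      have : (m + 1 : ℂ) * (z - z₀) ^ m * G z + (z - z₀) ^ (m + 1) * deriv G z
          = u z * ((z - z₀) ^ (m + 1) * G z) := by rw [← h1, ← h3', h2]
      rw [hψ]
      ring_nf
      ring_nf at this
      linear_combination this
    rw [eventually_nhdsWithin_iff]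
    filter_upwards [this] with z hz hz'
    have hzz : (z - z₀) ^ m ≠ 0 := pow_ne_zero _ (sub_ne_zero.mpr hz')
    exact (mul_eq_zero.mp hz).resolve_left hzz
  -- ψ is continuous at z₀ with value (m+1) * G z₀ ≠ 0
  have hψc : ContinuousAt ψ z₀ := by
    have hGc : ContinuousAt G z₀ := hG.continuousAt
    have hG'c : ContinuousAt (deriv G) z₀ := (analyticAt_deriv' hG).continuousAt
    have huc : ContinuousAt u z₀ := hu.continuousAt
    fun_prop
  have hlim : Tendsto ψ (𝓝[≠] z₀) (𝓝 (ψ z₀)) :=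
    hψc.continuousWithinAt.tendsto
  have hlim0 : Tendsto ψ (𝓝[≠] z₀) (𝓝 0) :=
    Tendsto.congr' (hpunct.mono fun z hz => hz.symm) tendsto_const_nhds
  have : ψ z₀ = 0 := tendsto_nhds_unique hlim hlim0
  rw [hψ] at this
  simp at this
  rcases this with h | h
  · exact absurd h (by exact_mod_cast Nat.succ_ne_zero m)
  · exact hG0 h


lemma schwarzian_eq_deriv (f : ℂ → ℂ) (z : ℂ) :
    schwarzian f z = deriv (deriv (deriv f)) z / deriv f z
      - 3 / 2 * (deriv (deriv f) z / deriv f z) ^ 2 := by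
  have h2 : iteratedDeriv 2 f = deriv (deriv f) := by
    rw [show (2 : ℕ) = 1 + 1 from rfl, iteratedDeriv_succ, iteratedDeriv_one]
  have h3 : iteratedDeriv 3 f = deriv (deriv (deriv f)) := by
    rw [show (3 : ℕ) = 2 + 1 from rfl, iteratedDeriv_succ, h2]
  rw [schwarzian, h2, h3]

lemma moebius_derivs {a b c d : ℂ} {g : ℂ → ℂ} {V : Set ℂ} (hV : IsOpen V)
    (hg : AnalyticOnNhd ℂ g V) (he : ∀ z ∈ V, c * g z + d ≠ 0) :
    ∀ z ∈ V,
      deriv (fun w => (a * g w + b) / (c * g w + d)) z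
        = (a * d - b * c) * deriv g z / (c * g z + d) ^ 2 ∧
      deriv (deriv (fun w => (a * g w + b) / (c * g w + d))) z
        = (a * d - b * c) * (deriv (deriv g) z * (c * g z + d) - 2 * c * (deriv g z) ^ 2)
            / (c * g z + d) ^ 3 ∧
      deriv (deriv (deriv (fun w => (a * g w + b) / (c * g w + d)))) z
        = (a * d - b * c) * (deriv (deriv (deriv g)) z * (c * g z + d) ^ 2
            - 6 * c * deriv g z * deriv (deriv g) z * (c * g z + d)
            + 6 * c ^ 2 * (deriv g z) ^ 3) / (c * g z + d) ^ 4 := by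
  set h : ℂ → ℂ := fun w => (a * g w + b) / (c * g w + d) with hh
  have hg1 : ∀ z ∈ V, HasDerivAt g (deriv g z) z :=
    fun z hz => (hg z hz).differentiableAt.hasDerivAt
  have hg2 : ∀ z ∈ V, HasDerivAt (deriv g) (deriv (deriv g) z) z :=
    fun z hz => (hg.deriv z hz).differentiableAt.hasDerivAt
  have hg3 : ∀ z ∈ V, HasDerivAt (deriv (deriv g)) (deriv (deriv (deriv g)) z) z :=
    fun z hz => (hg.deriv.deriv z hz).differentiableAt.hasDerivAt
  have hden : ∀ z ∈ V, HasDerivAt (fun w => c * g w + d) (c * deriv g z) z :=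
    fun z hz => ((hg1 z hz).const_mul c).add_const d
  -- first derivative
  have key1 : ∀ z ∈ V, HasDerivAt h ((a * d - b * c) * deriv g z / (c * g z + d) ^ 2) z := by
    intro z hz
    have he' := he z hz
    have hnum : HasDerivAt (fun w => a * g w + b) (a * deriv g z) z :=
      ((hg1 z hz).const_mul a).add_const b
    have := hnum.div (hden z hz) he'
    refine this.congr_deriv ?_
    symm
    rw [div_eq_div_iff (pow_ne_zero 2 he') (pow_ne_zero 2 he')]
    ring
  have eq1 : Set.EqOn (deriv h)
      (fun z => (a * d - b * c) * deriv g z / (c * g z + d) ^ 2) V :=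
    fun z hz => (key1 z hz).deriv
  -- second derivative
  have key2 : ∀ z ∈ V, HasDerivAt (fun z => (a * d - b * c) * deriv g z / (c * g z + d) ^ 2)
      ((a * d - b * c) * (deriv (deriv g) z * (c * g z + d) - 2 * c * (deriv g z) ^ 2)
        / (c * g z + d) ^ 3) z := by
    intro z hz
    have he' := he z hz
    have hnum : HasDerivAt (fun w => (a * d - b * c) * deriv g w)
        ((a * d - b * c) * deriv (deriv g) z) z := (hg2 z hz).const_mul _
    have hd2 : HasDerivAt (fun w => (c * g w + d) ^ 2)
        (2 * (c * g z + d) ^ 1 * (c * deriv g z)) z := (hden z hz).pow 2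
    have := hnum.div hd2 (pow_ne_zero 2 he')
    refine this.congr_deriv ?_
    symm
    rw [div_eq_div_iff (pow_ne_zero 3 he') (pow_ne_zero 2 (pow_ne_zero 2 he'))]
    ring
  have eq2 : Set.EqOn (deriv (deriv h))
      (fun z => (a * d - b * c) * (deriv (deriv g) z * (c * g z + d)
        - 2 * c * (deriv g z) ^ 2) / (c * g z + d) ^ 3) V := by
    intro z hz
    have hev : deriv h =ᶠ[𝓝 z] fun z => (a * d - b * c) * deriv g z / (c * g z + d) ^ 2 :=
      eventuallyEq_of_mem (hV.mem_nhds hz) eq1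
    rw [hev.deriv_eq, (key2 z hz).deriv]
  -- third derivative
  have key3 : ∀ z ∈ V, HasDerivAt (fun z => (a * d - b * c) * (deriv (deriv g) z * (c * g z + d)
        - 2 * c * (deriv g z) ^ 2) / (c * g z + d) ^ 3)
      ((a * d - b * c) * (deriv (deriv (deriv g)) z * (c * g z + d) ^ 2
        - 6 * c * deriv g z * deriv (deriv g) z * (c * g z + d)
        + 6 * c ^ 2 * (deriv g z) ^ 3) / (c * g z + d) ^ 4) z := by
    intro z hz
    have he' := he z hz
    have hnum := (((hg3 z hz).mul (hden z hz)).sub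
      (((hg2 z hz).pow 2).const_mul (2 * c))).const_mul (a * d - b * c)
    have hd3 : HasDerivAt (fun w => (c * g w + d) ^ 3)
        (3 * (c * g z + d) ^ 2 * (c * deriv g z)) z := (hden z hz).pow 3
    have := hnum.div hd3 (pow_ne_zero 3 he')
    refine this.congr_deriv ?_
    symm
    norm_num only [Pi.mul_apply, Pi.sub_apply, Pi.pow_apply]
    rw [div_eq_div_iff (pow_ne_zero 4 he') (pow_ne_zero 2 (pow_ne_zero 3 he'))]
    ring
  intro z hz
  refine ⟨eq1 hz, eq2 hz, ?_⟩
  have hev : deriv (deriv h) =ᶠ[𝓝 z] fun z => (a * d - b * c) * (deriv (deriv g) z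
      * (c * g z + d) - 2 * c * (deriv g z) ^ 2) / (c * g z + d) ^ 3 :=
    eventuallyEq_of_mem (hV.mem_nhds hz) eq2
  rw [hev.deriv_eq, (key3 z hz).deriv]

lemma schwarzian_moebius {a b c d : ℂ} (hΔ : a * d - b * c ≠ 0) {g : ℂ → ℂ} {V : Set ℂ}
    (hV : IsOpen V) (hg : AnalyticOnNhd ℂ g V) (hg' : ∀ z ∈ V, deriv g z ≠ 0)
    (he : ∀ z ∈ V, c * g z + d ≠ 0) :
    ∀ z ∈ V, schwarzian (fun w => (a * g w + b) / (c * g w + d)) z = schwarzian g z := by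
  intro z hz
  obtain ⟨h1, h2, h3⟩ := moebius_derivs hV hg he z hz
  have he' := he z hz
  have hg1' := hg' z hz
  rw [schwarzian_eq_deriv, schwarzian_eq_deriv, h1, h2, h3]
  generalize deriv (deriv (deriv g)) z = g3
  generalize deriv (deriv g) z = g2
  generalize hE : (c * g z + d) = e at he' ⊢
  generalize hG : deriv g z = g1 at hg1' ⊢
  generalize hD : a * d - b * c = Δ at hΔ ⊢
  rw [div_div_div_comm, div_div_div_comm (Δ * (g2 * e - 2 * c * g1 ^ 2))]
  rw [show (e:ℂ)^4 / e^2 = e^2 by field_simp, show (e:ℂ)^3 / e^2 = e by field_simp]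
  rw [mul_div_mul_comm, div_self hΔ, one_mul, mul_div_mul_comm, div_self hΔ, one_mul]
  field_simp
  ring

lemma eventually_eq_of_schwarzian {f k : ℂ → ℂ} {W : Set ℂ} {z₀ : ℂ}
    (hW : IsOpen W) (hz₀ : z₀ ∈ W)
    (hf : AnalyticOnNhd ℂ f W) (hk : AnalyticOnNhd ℂ k W)
    (hf' : ∀ z ∈ W, deriv f z ≠ 0) (hk' : ∀ z ∈ W, deriv k z ≠ 0)
    (hS : ∀ z ∈ W, schwarzian f z = schwarzian k z)
    (h0 : f z₀ = k z₀) (h1 : deriv f z₀ = deriv k z₀)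
    (h2 : deriv (deriv f) z₀ = deriv (deriv k) z₀) :
    ∀ᶠ z in 𝓝 z₀, f z = k z := by
  have hWev : ∀ᶠ z in 𝓝 z₀, z ∈ W := hW.eventually_mem hz₀
  -- step 1 : T := f'' k' - k'' f' vanishes near z₀
  set T : ℂ → ℂ := fun z => deriv (deriv f) z * deriv k z - deriv (deriv k) z * deriv f z
    with hTdef
  have hTan : AnalyticAt ℂ T z₀ :=
    ((hf.deriv.deriv z₀ hz₀).mul (hk.deriv z₀ hz₀)).sub
      ((hk.deriv.deriv z₀ hz₀).mul (hf.deriv z₀ hz₀))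
  have hwan : AnalyticAt ℂ (fun z => 3 / 2 * (deriv (deriv f) z / deriv f z
      + deriv (deriv k) z / deriv k z)) z₀ :=
    analyticAt_const.mul (((hf.deriv.deriv z₀ hz₀).div (hf.deriv z₀ hz₀) (hf' z₀ hz₀)).add
      ((hk.deriv.deriv z₀ hz₀).div (hk.deriv z₀ hz₀) (hk' z₀ hz₀)))
  have hT0 : T z₀ = 0 := by rw [hTdef]; simp only [h1, h2]; ring
  have hode : ∀ᶠ z in 𝓝 z₀, deriv T z
      = (3 / 2 * (deriv (deriv f) z / deriv f z + deriv (deriv k) z / deriv k z)) * T z := by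
    filter_upwards [hWev] with z hz
    have hdT : HasDerivAt T
        (deriv (deriv (deriv f)) z * deriv k z + deriv (deriv f) z * deriv (deriv k) z
          - (deriv (deriv (deriv k)) z * deriv f z + deriv (deriv k) z * deriv (deriv f) z)) z :=
      (((hf.deriv.deriv z hz).differentiableAt.hasDerivAt).mul
        ((hk.deriv z hz).differentiableAt.hasDerivAt)).sub
        (((hk.deriv.deriv z hz).differentiableAt.hasDerivAt).mul
          ((hf.deriv z hz).differentiableAt.hasDerivAt))
    rw [hdT.deriv, hTdef]
    beta_reduce
    have hSz := hS z hz
    rw [schwarzian_eq_deriv, schwarzian_eq_deriv] at hSz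
    have hfz := hf' z hz
    have hkz := hk' z hz
    generalize deriv (deriv (deriv f)) z = f3 at *
    generalize deriv (deriv (deriv k)) z = k3 at *
    generalize deriv (deriv f) z = f2 at *
    generalize deriv (deriv k) z = k2 at *
    generalize deriv f z = f1 at *
    generalize deriv k z = k1 at *
    field_simp at hSz
    have hcan : (2 * f1 * k1) * (f3 * f1 * k1 ^ 2 * 2 - f2 ^ 2 * k1 ^ 2 * 3)
        = (2 * f1 * k1) * (k3 * k1 * f1 ^ 2 * 2 - k2 ^ 2 * f1 ^ 2 * 3) := by
      linear_combination (2 * f1 * k1) * hSz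
    have hpoly := mul_left_cancel₀
      (mul_ne_zero (mul_ne_zero two_ne_zero hfz) hkz) hcan
    field_simp
    linear_combination hpoly
  have hTzero : ∀ᶠ z in 𝓝 z₀, T z = 0 := eventually_zero_of_ode hTan hwan hT0 hode
  -- step 2 : f' - k' vanishes near z₀
  have hT2an : AnalyticAt ℂ (fun z => deriv f z - deriv k z) z₀ :=
    (hf.deriv z₀ hz₀).sub (hk.deriv z₀ hz₀)
  have hu2an : AnalyticAt ℂ (fun z => deriv (deriv f) z / deriv f z) z₀ :=
    (hf.deriv.deriv z₀ hz₀).div (hf.deriv z₀ hz₀) (hf' z₀ hz₀)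
  have hT20 : deriv f z₀ - deriv k z₀ = 0 := by rw [h1]; ring
  have hode2 : ∀ᶠ z in 𝓝 z₀, deriv (fun z => deriv f z - deriv k z) z
      = (deriv (deriv f) z / deriv f z) * (deriv f z - deriv k z) := by
    filter_upwards [hWev, hTzero] with z hz hTz
    have hd : HasDerivAt (fun z => deriv f z - deriv k z)
        (deriv (deriv f) z - deriv (deriv k) z) z :=
      ((hf.deriv z hz).differentiableAt.hasDerivAt).sub
        ((hk.deriv z hz).differentiableAt.hasDerivAt)
    rw [hd.deriv]
    have hTz' : deriv (deriv f) z * deriv k z - deriv (deriv k) z * deriv f z = 0 := hTz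
    have hfz := hf' z hz
    field_simp
    linear_combination hTz'
  have hT2zero : ∀ᶠ z in 𝓝 z₀, deriv f z - deriv k z = 0 :=
    eventually_zero_of_ode hT2an hu2an hT20 hode2
  -- step 3 : f - k vanishes near z₀
  have hT3an : AnalyticAt ℂ (fun z => f z - k z) z₀ := (hf z₀ hz₀).sub (hk z₀ hz₀)
  have hT30 : f z₀ - k z₀ = 0 := by rw [h0]; ring
  have hode3 : ∀ᶠ z in 𝓝 z₀, deriv (fun z => f z - k z) z = (0 : ℂ → ℂ) z * (f z - k z) := by
    filter_upwards [hWev, hT2zero] with z hz hTz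
    have hd : HasDerivAt (fun z => f z - k z) (deriv f z - deriv k z) z :=
      ((hf z hz).differentiableAt.hasDerivAt).sub ((hk z hz).differentiableAt.hasDerivAt)
    have hTz' : deriv f z - deriv k z = 0 := hTz
    rw [hd.deriv, hTz']
    simp
  have := eventually_zero_of_ode hT3an analyticAt_const hT30 hode3
  filter_upwards [this] with z hz
  exact sub_eq_zero.mp hz

/-- Two holomorphic functions with nonvanishing derivative and equal Schwarzian
derivatives on a nonempty connected open set differ by postcomposition with a
Möbius transformation. -/
theorem moebius_postcomp_of_schwarzian_eq (U : Set ℂ) (hU : IsOpen U)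
    (hUc : IsConnected U) (hUne : U.Nonempty)
    (f g : ℂ → ℂ)
    (hf : DifferentiableOn ℂ f U) (hf' : ∀ z ∈ U, deriv f z ≠ 0)
    (hg : DifferentiableOn ℂ g U) (hg' : ∀ z ∈ U, deriv g z ≠ 0)
    (hS : ∀ z ∈ U, schwarzian f z = schwarzian g z) :
    ∃ a b c d : ℂ, a * d - b * c ≠ 0 ∧
      ∀ z ∈ U, c * g z + d ≠ 0 ∧ f z = (a * g z + b) / (c * g z + d) := by
  obtain ⟨z₀, hz₀⟩ := hUne
  have hfa : AnalyticOnNhd ℂ f U := hf.analyticOnNhd hU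
  have hga : AnalyticOnNhd ℂ g U := hg.analyticOnNhd hU
  have hg₁ : deriv g z₀ ≠ 0 := hg' z₀ hz₀
  set m : ℂ := deriv f z₀ / deriv g z₀ with hm
  have hm0 : m ≠ 0 := div_ne_zero (hf' z₀ hz₀) hg₁
  set c : ℂ := (m * deriv (deriv g) z₀ - deriv (deriv f) z₀) / (2 * m * (deriv g z₀) ^ 2)
    with hc
  set a : ℂ := m + c * f z₀ with ha
  set b : ℂ := f z₀ - a * g z₀ with hb
  set d : ℂ := 1 - c * g z₀ with hd
  have hdet : a * d - b * c = m := by rw [ha, hb, hd]; ring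
  have hdet0 : a * d - b * c ≠ 0 := by rw [hdet]; exact hm0
  have he₀ : c * g z₀ + d = 1 := by rw [hd]; ring
  -- the open set where the Möbius denominator does not vanish
  set V : Set ℂ := U ∩ (fun z => c * g z + d) ⁻¹' {(0 : ℂ)}ᶜ with hV
  have hVo : IsOpen V := by
    apply ContinuousOn.isOpen_inter_preimage ?_ hU isOpen_compl_singleton
    exact (continuousOn_const.mul hg.continuousOn).add continuousOn_const
  have hVsub : V ⊆ U := Set.inter_subset_left
  have hz₀V : z₀ ∈ V := ⟨hz₀, by simp [he₀]⟩
  have heV : ∀ z ∈ V, c * g z + d ≠ 0 := fun z hz => hz.2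
  have hgaV : AnalyticOnNhd ℂ g V := fun z hz => hga z (hVsub hz)
  have hg'V : ∀ z ∈ V, deriv g z ≠ 0 := fun z hz => hg' z (hVsub hz)
  set k : ℂ → ℂ := fun w => (a * g w + b) / (c * g w + d) with hk
  have hSk : ∀ z ∈ V, schwarzian k z = schwarzian g z :=
    schwarzian_moebius hdet0 hVo hgaV hg'V heV
  have hkd := moebius_derivs (a := a) (b := b) (c := c) (d := d) hVo hgaV heV
  have hkaV : AnalyticOnNhd ℂ k V := fun z hz =>
    ((analyticAt_const.mul (hgaV z hz)).add analyticAt_const).div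
      ((analyticAt_const.mul (hgaV z hz)).add analyticAt_const) (heV z hz)
  have hk'V : ∀ z ∈ V, deriv k z ≠ 0 := by
    intro z hz
    rw [(hkd z hz).1]
    exact div_ne_zero (mul_ne_zero hdet0 (hg'V z hz)) (pow_ne_zero 2 (heV z hz))
  have hfaV : AnalyticOnNhd ℂ f V := fun z hz => hfa z (hVsub hz)
  have hf'V : ∀ z ∈ V, deriv f z ≠ 0 := fun z hz => hf' z (hVsub hz)
  have hSV : ∀ z ∈ V, schwarzian f z = schwarzian k z := fun z hz =>
    (hS z (hVsub hz)).trans (hSk z hz).symm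
  -- initial conditions at z₀
  have hk0 : f z₀ = k z₀ := by
    rw [hk]
    simp only [he₀, div_one]
    rw [hb]; ring
  have hk1 : deriv f z₀ = deriv k z₀ := by
    rw [(hkd z₀ hz₀V).1, hdet, he₀, hm]
    field_simp
  have hk2 : deriv (deriv f) z₀ = deriv (deriv k) z₀ := by
    rw [(hkd z₀ hz₀V).2.1, hdet, he₀, hc]
    field_simp
    ring
  -- local equality of f and k near z₀
  have hev : ∀ᶠ z in 𝓝 z₀, f z = k z :=
    eventually_eq_of_schwarzian hVo hz₀V hfaV hkaV hf'V hk'V hSV hk0 hk1 hk2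
  -- propagate by the identity theorem
  set φ : ℂ → ℂ := fun z => f z * (c * g z + d) - (a * g z + b) with hφ
  have hφa : AnalyticOnNhd ℂ φ U := fun z hz =>
    ((hfa z hz).mul ((analyticAt_const.mul (hga z hz)).add analyticAt_const)).sub
      ((analyticAt_const.mul (hga z hz)).add analyticAt_const)
  have hφ0 : φ =ᶠ[𝓝 z₀] 0 := by
    filter_upwards [hev, hVo.eventually_mem hz₀V] with z hfz hzV
    have hez := heV z hzV
    simp only [hφ, Pi.zero_apply, hfz, hk]
    rw [div_mul_cancel₀ _ hez]
    ring
  have hEq : Set.EqOn φ 0 U :=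
    hφa.eqOn_zero_of_preconnected_of_eventuallyEq_zero hUc.isPreconnected hz₀ hφ0
  refine ⟨a, b, c, d, hdet0, fun z hz => ?_⟩
  have hφz : f z * (c * g z + d) - (a * g z + b) = 0 := hEq hz
  clear_value m c a b d
  have hez : c * g z + d ≠ 0 := by
    intro h0
    have hb0 : a * g z + b = 0 := by
      linear_combination f z * h0 - hφz
    exact hdet0 (by linear_combination a * h0 - c * hb0)
  refine ⟨hez, ?_⟩
  rw [eq_div_iff hez]
  linear_combination hφz
end

section
/- Let U ⊆ ℂ be open, let p : ℂ → ℂ be holomorphic on U, and let y₁, y₂ : ℂ → ℂ be holomorphic on U satisfying y₁'' + p·y₁ = 0 and y₂'' + p·y₂ = 0 on U. Assume y₂(z) ≠ 0 for all z ∈ U and that the Wronskian y₁'(z)·y₂(z) − y₁(z)·y₂'(z) is nonzero for all z ∈ U. Then the quotient f = y₁/y₂ satisfies S(f)(z) = 2·p(z) for every z ∈ U. -/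
private lemma schwarzian_aux (a b w q : ℂ) (ha : a ≠ 0) (hw : w ≠ 0) :
    (2 * w * q / a ^ 2 + 6 * w * b ^ 2 / a ^ 4) / (w / a ^ 2) -
      (3 / 2) * (-2 * w * b / a ^ 3 / (w / a ^ 2)) ^ 2 = 2 * q := by
  field_simp
  have h1 : w ^ 3 * w⁻¹ ^ 3 = 1 := by rw [← mul_pow, mul_inv_cancel₀ hw, one_pow]
  have h2 : a ^ 12 * a⁻¹ ^ 12 = 1 := by rw [← mul_pow, mul_inv_cancel₀ ha, one_pow]
  ring

/-- The quotient of two independent holomorphic solutions of `y'' + p y = 0`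
has Schwarzian derivative `2 p`. -/
theorem schwarzian_quotient_of_solutions (U : Set ℂ) (hU : IsOpen U)
    (p y₁ y₂ : ℂ → ℂ)
    (hp : DifferentiableOn ℂ p U)
    (hy₁ : DifferentiableOn ℂ y₁ U) (hy₂ : DifferentiableOn ℂ y₂ U)
    (hode₁ : ∀ z ∈ U, iteratedDeriv 2 y₁ z + p z * y₁ z = 0)
    (hode₂ : ∀ z ∈ U, iteratedDeriv 2 y₂ z + p z * y₂ z = 0)
    (hy₂ne : ∀ z ∈ U, y₂ z ≠ 0)
    (hW : ∀ z ∈ U, deriv y₁ z * y₂ z - y₁ z * deriv y₂ z ≠ 0)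
    (f : ℂ → ℂ) (hf : f = fun z => y₁ z / y₂ z) :
    ∀ z ∈ U, schwarzian f z = 2 * p z := by
  have ha₁ : AnalyticOnNhd ℂ y₁ U := hy₁.analyticOnNhd hU
  have ha₂ : AnalyticOnNhd ℂ y₂ U := hy₂.analyticOnNhd hU
  have hd₁ : ∀ z ∈ U, DifferentiableAt ℂ y₁ z := fun z hz => (ha₁ z hz).differentiableAt
  have hd₂ : ∀ z ∈ U, DifferentiableAt ℂ y₂ z := fun z hz => (ha₂ z hz).differentiableAt
  have hd₁' : ∀ z ∈ U, DifferentiableAt ℂ (deriv y₁) z :=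
    fun z hz => (ha₁.deriv z hz).differentiableAt
  have hd₂' : ∀ z ∈ U, DifferentiableAt ℂ (deriv y₂) z :=
    fun z hz => (ha₂.deriv z hz).differentiableAt
  set W : ℂ → ℂ := fun w => deriv y₁ w * y₂ w - y₁ w * deriv y₂ w with hWdef
  have hdW : ∀ z ∈ U, DifferentiableAt ℂ W z := fun z hz =>
    (((hd₁' z hz).mul (hd₂ z hz)).sub ((hd₁ z hz).mul (hd₂' z hz)))
  have hode₁' : ∀ z ∈ U, deriv (deriv y₁) z = -(p z * y₁ z) := by
    intro z hz
    have h := hode₁ z hz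
    rw [iteratedDeriv_succ, iteratedDeriv_one] at h
    linear_combination h
  have hode₂' : ∀ z ∈ U, deriv (deriv y₂) z = -(p z * y₂ z) := by
    intro z hz
    have h := hode₂ z hz
    rw [iteratedDeriv_succ, iteratedDeriv_one] at h
    linear_combination h
  -- W' = 0 on U
  have hW0 : ∀ z ∈ U, deriv W z = 0 := by
    intro z hz
    rw [hWdef]
    rw [deriv_fun_sub (f := fun w => deriv y₁ w * y₂ w) (g := fun w => y₁ w * deriv y₂ w) ((hd₁' z hz).mul (hd₂ z hz)) ((hd₁ z hz).mul (hd₂' z hz)),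
      deriv_fun_mul (hd₁' z hz) (hd₂ z hz), deriv_fun_mul (hd₁ z hz) (hd₂' z hz),
      hode₁' z hz, hode₂' z hz]
    ring
  -- first derivative of f on U
  have hf' : ∀ z ∈ U, deriv f z = W z / y₂ z ^ 2 := by
    intro z hz
    rw [hf, deriv_fun_div (hd₁ z hz) (hd₂ z hz) (hy₂ne z hz)]
  -- second derivative of f on U
  have hf'' : ∀ z ∈ U, iteratedDeriv 2 f z = -2 * W z * deriv y₂ z / y₂ z ^ 3 := by
    intro z hz
    have hev : deriv f =ᶠ[nhds z] fun w => W w / y₂ w ^ 2 := by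
      filter_upwards [hU.mem_nhds hz] with w hw using hf' w hw
    rw [iteratedDeriv_succ, iteratedDeriv_one, hev.deriv_eq]
    have hdsq : DifferentiableAt ℂ (fun w => y₂ w ^ 2) z := (hd₂ z hz).pow 2
    have hsqne : y₂ z ^ 2 ≠ 0 := pow_ne_zero 2 (hy₂ne z hz)
    rw [deriv_fun_div (hdW z hz) hdsq hsqne, hW0 z hz]
    have : deriv (fun w => y₂ w ^ 2) z = 2 * y₂ z * deriv y₂ z := by
      rw [show (fun w => y₂ w ^ 2) = (fun w => y₂ w * y₂ w) by ext w; ring,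
        deriv_fun_mul (hd₂ z hz) (hd₂ z hz)]
      ring
    rw [this]
    have hne := hy₂ne z hz
    field_simp
    ring
  -- third derivative of f on U
  have hf''' : ∀ z ∈ U,
      iteratedDeriv 3 f z = 2 * W z * p z / y₂ z ^ 2 + 6 * W z * deriv y₂ z ^ 2 / y₂ z ^ 4 := by
    intro z hz
    have hev : iteratedDeriv 2 f =ᶠ[nhds z] fun w => -2 * W w * deriv y₂ w / y₂ w ^ 3 := by
      filter_upwards [hU.mem_nhds hz] with w hw using hf'' w hw
    rw [show (3 : ℕ) = 2 + 1 from rfl, iteratedDeriv_succ, hev.deriv_eq]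
    have hnum : DifferentiableAt ℂ (fun w => -2 * W w * deriv y₂ w) z :=
      ((differentiableAt_const (-2 : ℂ)).mul (hdW z hz)).mul (hd₂' z hz)
    have hden : DifferentiableAt ℂ (fun w => y₂ w ^ 3) z := (hd₂ z hz).pow 3
    have hcune : y₂ z ^ 3 ≠ 0 := pow_ne_zero 3 (hy₂ne z hz)
    rw [deriv_fun_div hnum hden hcune]
    have h1 : deriv (fun w => -2 * W w * deriv y₂ w) z =
        -2 * W z * deriv (deriv y₂) z := by
      rw [deriv_fun_mul (c := fun w => -2 * W w) (((differentiableAt_const (-2 : ℂ)).mul (hdW z hz))) (hd₂' z hz),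
        deriv_const_mul _ (hdW z hz), hW0 z hz]
      ring
    have h2 : deriv (fun w => y₂ w ^ 3) z = 3 * y₂ z ^ 2 * deriv y₂ z := by
      rw [show (fun w => y₂ w ^ 3) = (fun w => y₂ w * y₂ w * y₂ w) by ext w; ring,
        deriv_fun_mul (c := fun w => y₂ w * y₂ w) ((hd₂ z hz).mul (hd₂ z hz)) (hd₂ z hz),
        deriv_fun_mul (hd₂ z hz) (hd₂ z hz)]
      ring
    rw [h1, h2, hode₂' z hz]
    have hne := hy₂ne z hz
    field_simp
    ring
  -- finish
  intro z hz
  have hWne := hW z hz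
  have hne := hy₂ne z hz
  have hf'ne : deriv f z ≠ 0 := by
    rw [hf' z hz]
    exact div_ne_zero hWne (pow_ne_zero 2 hne)
  have hWzne : W z ≠ 0 := hWne
  rw [schwarzian, hf' z hz, hf'' z hz, hf''' z hz]
  exact schwarzian_aux (y₂ z) (deriv y₂ z) (W z) (p z) hne hWzne
end

section
/- Let U ⊆ ℂ be a nonempty connected open set and let f : ℂ → ℂ be holomorphic and injective on U. Suppose that for every a ∈ ℂ and r > 0 such that the circle C(a, r) = {z : |z − a| = r} is contained in U, the image f(C(a, r)) is contained in some circle or some affine line of ℂ. Then f is the restriction to U of a Möbius transformation: there exist a, b, c, d ∈ ℂ with a·d − b·c ≠ 0 such that c·z + d ≠ 0 and f(z) = (a·z + b)/(c·z + d) for all z ∈ U. -/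
open Complex Metric Set Filter Topology

noncomputable section



noncomputable def bl (w v : ℂ) : ℂ := (v + w) / (1 + (starRingEnd ℂ) w * v)

lemma bl_denom_ne {w v : ℂ} (hw : ‖w‖ < 1) (hv : ‖v‖ < 1) :
    1 + (starRingEnd ℂ) w * v ≠ 0 := by
  intro h
  have h1 : (starRingEnd ℂ) w * v = -1 := by linear_combination h
  have h2 : ‖(starRingEnd ℂ) w * v‖ = 1 := by rw [h1]; simp
  rw [norm_mul, Complex.norm_conj] at h2
  nlinarith [norm_nonneg w, norm_nonneg v]

lemma normSq_bl (w v : ℂ) :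
    Complex.normSq (1 + (starRingEnd ℂ) w * v) - Complex.normSq (v + w)
      = (1 - Complex.normSq v) * (1 - Complex.normSq w) := by
  simp only [Complex.normSq_apply, Complex.add_re, Complex.add_im, Complex.mul_re, Complex.mul_im,
    Complex.one_re, Complex.one_im, Complex.conj_re, Complex.conj_im]
  ring

lemma abs_bl_lt {w v : ℂ} (hw : ‖w‖ < 1) (hv : ‖v‖ < 1) :
    ‖bl w v‖ < 1 := by
  have hd := bl_denom_ne hw hv
  have hdpos : 0 < ‖1 + (starRingEnd ℂ) w * v‖ := by
    simpa [norm_pos_iff] using hd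
  rw [bl, norm_div, div_lt_one hdpos]
  have h1 : Complex.normSq (v + w) < Complex.normSq (1 + (starRingEnd ℂ) w * v) := by
    have := normSq_bl w v
    have hv2 : Complex.normSq v < 1 := by
      rw [← Complex.sq_norm]; nlinarith [norm_nonneg v]
    have hw2 : Complex.normSq w < 1 := by
      rw [← Complex.sq_norm]; nlinarith [norm_nonneg w]
    nlinarith
  have := Complex.sq_norm (v + w)
  have := Complex.sq_norm (1 + (starRingEnd ℂ) w * v)
  nlinarith [norm_nonneg (v + w), norm_nonneg (1 + (starRingEnd ℂ) w * v)]

lemma bl_bl {w y : ℂ} (hw : ‖w‖ < 1) (hy : ‖y‖ < 1) :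
    bl w (bl (-w) y) = y := by
  have hw' : ‖-w‖ < 1 := by simpa using hw
  have hd1 : 1 + (starRingEnd ℂ) (-w) * y ≠ 0 := bl_denom_ne hw' hy
  have hv : ‖bl (-w) y‖ < 1 := abs_bl_lt hw' hy
  have hd2 : 1 + (starRingEnd ℂ) w * bl (-w) y ≠ 0 := bl_denom_ne hw hv
  simp only [bl, map_neg] at hd1 hd2 ⊢
  rw [div_eq_iff hd2]
  linear_combination div_mul_cancel₀ (y + -w) hd1


lemma exists_good_ball {U : Set ℂ} (hU : IsOpen U) {f : ℂ → ℂ}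
    (hf : DifferentiableOn ℂ f U) (hinj : Set.InjOn f U) (hUne : U.Nonempty) :
    ∃ z₀ r, 0 < r ∧ z₀ ∈ U ∧ closedBall z₀ r ⊆ U ∧ ∀ z ∈ closedBall z₀ r, deriv f z ≠ 0 := by
  obtain ⟨p, hp⟩ := hUne
  obtain ⟨ε, hε, hballU⟩ := Metric.isOpen_iff.1 hU p hp
  have habs : ‖(ε : ℂ) / 2‖ = ε / 2 := by
    rw [norm_div, Complex.norm_real, Complex.norm_two, Real.norm_of_nonneg hε.le]
  have hmem : p + (ε : ℂ) / 2 ∈ ball p ε := by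
    simp only [mem_ball, dist_self_add_left, habs]
    linarith
  have hex : ∃ z₀ ∈ ball p ε, deriv f z₀ ≠ 0 := by
    by_contra hcon
    push_neg at hcon
    have hconst : f p = f (p + (ε : ℂ) / 2) := by
      apply (convex_ball p ε).is_const_of_fderivWithin_eq_zero (hf.mono hballU)
      · intro x hx
        have hdx : DifferentiableAt ℂ f x := hf.differentiableAt (hU.mem_nhds (hballU hx))
        rw [fderivWithin_of_isOpen isOpen_ball hx, hdx.hasDerivAt.hasFDerivAt.fderiv,
          hcon x hx]
        ext
        simp
      · exact mem_ball_self hε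
      · exact hmem
    have heq := hinj (hballU (mem_ball_self hε)) (hballU hmem) hconst
    have h0 : (ε : ℂ) = 0 := by linear_combination -2 * heq
    exact hε.ne' (by exact_mod_cast h0)
  obtain ⟨z₀, hz₀, hdz₀⟩ := hex
  have hz₀U : z₀ ∈ U := hballU hz₀
  have hda : AnalyticOnNhd ℂ (deriv f) U := (hf.analyticOnNhd hU).deriv
  have hev : ∀ᶠ z in 𝓝 z₀, deriv f z ≠ 0 ∧ z ∈ U :=
    ((hda z₀ hz₀U).continuousAt.eventually_ne hdz₀).and (hU.mem_nhds hz₀U)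
  obtain ⟨r, hr, hsub⟩ := Metric.nhds_basis_closedBall.eventually_iff.1 hev
  exact ⟨z₀, r, hr, hz₀U, fun z hz => (hsub hz).2, fun z hz => (hsub hz).1⟩


lemma line_case_absurd {U : Set ℂ} (hU : IsOpen U) {f : ℂ → ℂ}
    (hf : DifferentiableOn ℂ f U) {z₀ : ℂ} {r : ℝ} (hr : 0 < r)
    (hball : closedBall z₀ r ⊆ U) (hd : deriv f z₀ ≠ 0) {aL bL : ℂ} (hbL : bL ≠ 0)
    (him : ∀ z ∈ sphere z₀ r, ∃ t : ℝ, f z = aL + t * bL) : False := by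
  set h : ℂ → ℂ := fun z => (f z - aL) / bL with hh_def
  have hfd : DifferentiableOn ℂ f (closedBall z₀ r) := hf.mono hball
  have hhd : DifferentiableOn ℂ h (closedBall z₀ r) := (hfd.sub_const aL).div_const bL
  -- on the sphere, h is real
  have hsph : ∀ z ∈ sphere z₀ r, (h z).im = 0 := by
    intro z hz
    obtain ⟨t, ht⟩ := him z hz
    have : h z = (t : ℂ) := by
      rw [hh_def]; simp only; rw [ht]; field_simp; ring
    rw [this]; simp
  -- the two exponentials
  have key : ∀ (s : ℂ), s = Complex.I ∨ s = -Complex.I →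
      ∀ z ∈ closedBall z₀ r, ‖Complex.exp (s * h z)‖ ≤ 1 := by
    intro s hs z hz
    have hde : DiffContOnCl ℂ (fun z => Complex.exp (s * h z)) (ball z₀ r) := by
      apply DifferentiableOn.diffContOnCl
      rw [closure_ball z₀ hr.ne']
      exact (hhd.const_mul s).cexp
    apply norm_le_of_forall_mem_frontier_norm_le isBounded_ball hde
    · intro w hw
      rw [frontier_ball z₀ hr.ne'] at hw
      rw [Complex.norm_exp]
      have him0 := hsph w hw
      rcases hs with rfl | rfl <;>
        simp [Complex.mul_re, Complex.I_re, Complex.I_im, him0, Real.exp_le_one_iff]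
    · rw [closure_ball z₀ hr.ne']; exact hz
  -- hence im (h z) = 0 on the closed ball and the norm is 1
  have him0 : ∀ z ∈ closedBall z₀ r, (h z).im = 0 := by
    intro z hz
    have h1 := key Complex.I (Or.inl rfl) z hz
    have h2 := key (-Complex.I) (Or.inr rfl) z hz
    rw [Complex.norm_exp] at h1 h2
    simp only [Complex.mul_re, Complex.I_re, Complex.I_im, Complex.neg_re, Complex.neg_im,
      zero_mul, one_mul, zero_sub, neg_neg, neg_mul, neg_zero] at h1 h2
    rw [Real.exp_le_one_iff] at h1 h2
    linarith
  have hnorm1 : ∀ z ∈ closedBall z₀ r, ‖Complex.exp (Complex.I * h z)‖ = 1 := by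
    intro z hz
    rw [Complex.norm_exp]
    simp [Complex.mul_re, Complex.I_re, Complex.I_im, him0 z hz]
  -- strong maximum principle: e₁ is constant on the ball
  set e₁ : ℂ → ℂ := fun z => Complex.exp (Complex.I * h z) with he₁_def
  have hmax : IsMaxOn (norm ∘ e₁) (ball z₀ r) z₀ := by
    intro z hz
    simp only [Function.comp_apply, mem_setOf_eq, he₁_def]
    rw [hnorm1 z (ball_subset_closedBall hz), hnorm1 z₀ (mem_closedBall_self hr.le)]
  have heqOn : EqOn e₁ (Function.const ℂ (e₁ z₀)) (ball z₀ r) :=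
    Complex.eqOn_of_isPreconnected_of_isMaxOn_norm (convex_ball z₀ r).isPreconnected
      isOpen_ball (((hhd.const_mul Complex.I).cexp).mono ball_subset_closedBall)
      (mem_ball_self hr) hmax
  have hev : e₁ =ᶠ[𝓝 z₀] Function.const ℂ (e₁ z₀) :=
    heqOn.eventuallyEq_of_mem (isOpen_ball.mem_nhds (mem_ball_self hr))
  have hd0 : deriv e₁ z₀ = 0 := by rw [hev.deriv_eq]; exact deriv_const _ _
  have hfz₀ : DifferentiableAt ℂ f z₀ :=
    hf.differentiableAt (hU.mem_nhds (hball (mem_closedBall_self hr.le)))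
  have hha : HasDerivAt h (deriv f z₀ / bL) z₀ := (hfz₀.hasDerivAt.sub_const aL).div_const bL
  have hede : HasDerivAt e₁ (Complex.exp (Complex.I * h z₀) * (Complex.I * (deriv f z₀ / bL))) z₀ :=
    (hha.const_mul Complex.I).cexp
  have := hede.deriv
  rw [hd0] at this
  have hz : deriv f z₀ = 0 := by
    field_simp [Complex.exp_ne_zero, Complex.I_ne_zero, hbL] at this
    simpa [Complex.exp_ne_zero, Complex.I_ne_zero] using this.symm
  exact hd hz


lemma circle_case {U : Set ℂ} (hU : IsOpen U) {f : ℂ → ℂ}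
    (hf : DifferentiableOn ℂ f U) {z₀ : ℂ} {r : ℝ} (hr : 0 < r)
    (hball : closedBall z₀ r ⊆ U) (hder : ∀ z ∈ closedBall z₀ r, deriv f z ≠ 0)
    {a' : ℂ} {r' : ℝ} (hr' : 0 < r')
    (him : ∀ z ∈ sphere z₀ r, ‖f z - a'‖ = r') :
    MapsTo f (ball z₀ r) (ball a' r') ∧ ball a' r' ⊆ f '' ball z₀ r := by
  have hfd : DifferentiableOn ℂ f (closedBall z₀ r) := hf.mono hball
  -- weak maximum modulus bound
  have hle : ∀ z ∈ closedBall z₀ r, ‖f z - a'‖ ≤ r' := by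
    intro z hz
    have hde : DiffContOnCl ℂ (fun z => f z - a') (ball z₀ r) := by
      apply DifferentiableOn.diffContOnCl
      rw [closure_ball z₀ hr.ne']
      exact hfd.sub_const a'
    apply norm_le_of_forall_mem_frontier_norm_le isBounded_ball hde
    · intro w hw
      rw [frontier_ball z₀ hr.ne'] at hw
      rw [him w hw]
    · rw [closure_ball z₀ hr.ne']; exact hz
  -- strict bound on the open ball
  have hmapsTo : MapsTo f (ball z₀ r) (ball a' r') := by
    intro z hz
    rw [mem_ball, Complex.dist_eq]
    rcases lt_or_eq_of_le (hle z (ball_subset_closedBall hz)) with h | h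
    · exact h
    · exfalso
      have hmax : IsMaxOn (norm ∘ fun z => f z - a') (ball z₀ r) z := by
        intro y hy
        simp only [Function.comp_apply, mem_setOf_eq]
        rw [h]
        exact hle y (ball_subset_closedBall hy)
      have heqOn : EqOn (fun z => f z - a') (Function.const ℂ (f z - a')) (ball z₀ r) :=
        Complex.eqOn_of_isPreconnected_of_isMaxOn_norm (convex_ball z₀ r).isPreconnected
          isOpen_ball ((hfd.sub_const a').mono ball_subset_closedBall) hz hmax
      have hfev : f =ᶠ[𝓝 z₀] Function.const ℂ (f z) := by
        have : (fun w => f w - a') =ᶠ[𝓝 z₀] Function.const ℂ (f z - a') :=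
          heqOn.eventuallyEq_of_mem (isOpen_ball.mem_nhds (mem_ball_self hr))
        filter_upwards [this] with w hw
        have : f w - a' = f z - a' := hw
        simpa using this
      have : deriv f z₀ = 0 := by rw [hfev.deriv_eq]; exact deriv_const _ _
      exact hder z₀ (mem_closedBall_self hr.le) this
  -- f '' ball is open
  have hopen : IsOpen (f '' ball z₀ r) := by
    rw [isOpen_iff_mem_nhds]
    rintro y ⟨z, hz, rfl⟩
    have hfa : AnalyticAt ℂ f z := hf.analyticAt (hU.mem_nhds (hball (ball_subset_closedBall hz)))
    obtain ⟨p, hp⟩ := hfa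
    have hs : HasStrictDerivAt f (deriv f z) z := by
      have h1 := hp.hasStrictDerivAt
      have h2 := h1.hasDerivAt.deriv
      rwa [← h2] at h1
    have hmap := hs.map_nhds_eq (hder z (ball_subset_closedBall hz))
    rw [← hmap]
    exact image_mem_map (isOpen_ball.mem_nhds hz)
  -- the image of the closed ball meets the small ball only within f '' ball
  have hclaim : ∀ w ∈ ball a' r', w ∈ f '' closedBall z₀ r → w ∈ f '' ball z₀ r := by
    rintro w hw ⟨z, hz, rfl⟩
    rcases lt_or_eq_of_le (mem_closedBall.1 hz) with h | h
    · exact ⟨z, mem_ball.2 h, rfl⟩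
    · exfalso
      have : ‖f z - a'‖ = r' := him z (mem_sphere.2 h)
      rw [mem_ball, Complex.dist_eq, this] at hw
      exact lt_irrefl _ hw
  -- clopen argument
  refine ⟨hmapsTo, ?_⟩
  by_contra hnsub
  have hcompact : IsCompact (f '' closedBall z₀ r) :=
    (isCompact_closedBall z₀ r).image_of_continuousOn hfd.continuousOn
  have hpre : IsPreconnected (ball a' r') := (convex_ball a' r').isPreconnected
  have hsv : (ball a' r' ∩ (f '' closedBall z₀ r)ᶜ).Nonempty := by
    rw [not_subset] at hnsub
    obtain ⟨w, hw, hw'⟩ := hnsub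
    exact ⟨w, hw, fun hc => hw' (hclaim w hw hc)⟩
  have hsu : (ball a' r' ∩ f '' ball z₀ r).Nonempty :=
    ⟨f z₀, hmapsTo (mem_ball_self hr), ⟨z₀, mem_ball_self hr, rfl⟩⟩
  have hcover : ball a' r' ⊆ f '' ball z₀ r ∪ (f '' closedBall z₀ r)ᶜ := by
    intro w hw
    by_cases hc : w ∈ f '' closedBall z₀ r
    · exact Or.inl (hclaim w hw hc)
    · exact Or.inr hc
  obtain ⟨x, hx1, hx2, hx3⟩ :=
    hpre _ _ hopen hcompact.isClosed.isOpen_compl hcover hsu hsv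
  exact hx3 (image_mono ball_subset_closedBall hx2)

/-- A circle in `ℂ` with center `a` and radius `r`. -/
def circleSet (a : ℂ) (r : ℝ) : Set ℂ := {z : ℂ | ‖z - a‖ = r}

/-- An affine (real) line in `ℂ` through `a` with direction `b ≠ 0`. -/
def lineSet (a b : ℂ) : Set ℂ := {z : ℂ | ∃ t : ℝ, z = a + t * b}

/-- An injective holomorphic map on a nonempty connected open set that sends every
circle contained in its domain into a circle or an affine line is the restriction
of a Möbius transformation. -/
theorem moebius_of_maps_circles_to_circles_or_lines
    (U : Set ℂ) (hU : IsOpen U) (hUc : IsConnected U) (hUne : U.Nonempty)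
    (f : ℂ → ℂ) (hf : DifferentiableOn ℂ f U) (hinj : Set.InjOn f U)
    (hcirc : ∀ (a : ℂ) (r : ℝ), 0 < r → circleSet a r ⊆ U →
      (∃ a' : ℂ, ∃ r' : ℝ, 0 < r' ∧ f '' circleSet a r ⊆ circleSet a' r') ∨
      (∃ a' b' : ℂ, b' ≠ 0 ∧ f '' circleSet a r ⊆ lineSet a' b')) :
    ∃ a b c d : ℂ, a * d - b * c ≠ 0 ∧
      ∀ z ∈ U, c * z + d ≠ 0 ∧ f z = (a * z + b) / (c * z + d) := by
  classical
  obtain ⟨z₀, r, hr, hz₀U, hball, hder⟩ := exists_good_ball hU hf hinj hUne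
  have hrC : (r : ℂ) ≠ 0 := Complex.ofReal_ne_zero.2 hr.ne'
  have hsph_eq : circleSet z₀ r = sphere z₀ r := by
    ext z; simp [circleSet, mem_sphere, Complex.dist_eq]
  have hsphU : circleSet z₀ r ⊆ U := by
    rw [hsph_eq]; exact fun z hz => hball (sphere_subset_closedBall hz)
  rcases hcirc z₀ r hr hsphU with ⟨a', r', hr', him⟩ | ⟨aL, bL, hbL, him⟩
  swap
  · exfalso
    have him2 : ∀ z ∈ sphere z₀ r, ∃ t : ℝ, f z = aL + t * bL := by
      intro z hz
      exact him ⟨z, by rw [hsph_eq]; exact hz, rfl⟩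
    exact line_case_absurd hU hf hr hball (hder z₀ (mem_closedBall_self hr.le)) hbL him2
  have him' : ∀ z ∈ sphere z₀ r, ‖f z - a'‖ = r' := by
    intro z hz
    have := him ⟨z, by rw [hsph_eq]; exact hz, rfl⟩
    exact this
  have hr'C : (r' : ℂ) ≠ 0 := Complex.ofReal_ne_zero.2 hr'.ne'
  obtain ⟨hmaps, hsurj⟩ := circle_case hU hf hr hball hder hr' him'
  have hballU : ball z₀ r ⊆ U := fun z hz => hball (ball_subset_closedBall hz)
  -- the inverse function
  set g : ℂ → ℂ := Function.invFunOn f (ball z₀ r) with hg_def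
  have hginv : ∀ z ∈ ball z₀ r, g (f z) = z := fun z hz =>
    (hinj.mono hballU).leftInvOn_invFunOn hz
  have hgmem : ∀ w ∈ ball a' r', g w ∈ ball z₀ r ∧ f (g w) = w := by
    intro w hw
    obtain ⟨z, hz, rfl⟩ := hsurj hw
    rw [hginv z hz]
    exact ⟨hz, rfl⟩
  have hstrict : ∀ z ∈ ball z₀ r, HasStrictDerivAt f (deriv f z) z := by
    intro z hz
    obtain ⟨p, hp⟩ := hf.analyticAt (hU.mem_nhds (hballU hz))
    have h1 := hp.hasStrictDerivAt
    have h2 := h1.hasDerivAt.deriv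
    rwa [← h2] at h1
  have hgd : ∀ w ∈ ball a' r', DifferentiableAt ℂ g w := by
    intro w hw
    obtain ⟨z, hz, rfl⟩ := hsurj hw
    have hg_ev : ∀ᶠ x in 𝓝 z, g (f x) = x := by
      filter_upwards [isOpen_ball.mem_nhds hz] with x hx using hginv x hx
    exact ((hstrict z hz).to_local_left_inverse
      (hder z (ball_subset_closedBall hz)) hg_ev).hasDerivAt.differentiableAt
  -- normalized maps
  set w₀ : ℂ := (f z₀ - a') / r' with hw₀_def
  have hw₀ : ‖w₀‖ < 1 := by
    have := hmaps (mem_ball_self hr)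
    rw [mem_ball, Complex.dist_eq] at this
    rw [hw₀_def, norm_div, Complex.norm_real, Real.norm_of_nonneg hr'.le, div_lt_one hr']
    exact this
  have hw₀' : ‖-w₀‖ < 1 := by simpa using hw₀
  set F : ℂ → ℂ := fun z => (f (z₀ + r * z) - a') / r' with hF_def
  set H : ℂ → ℂ := fun z => bl (-w₀) (F z) with hH_def
  set K : ℂ → ℂ := fun v => (g (a' + r' * bl w₀ v) - z₀) / r with hK_def
  have hτ : ∀ z ∈ ball (0 : ℂ) 1, z₀ + r * z ∈ ball z₀ r := by
    intro z hz
    rw [mem_ball, dist_self_add_left, norm_mul, Complex.norm_real,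
      Real.norm_of_nonneg hr.le]
    rw [mem_ball, Complex.dist_eq, sub_zero] at hz
    nlinarith [norm_nonneg z]
  have hFlt : ∀ z ∈ ball (0 : ℂ) 1, ‖F z‖ < 1 := by
    intro z hz
    have := hmaps (hτ z hz)
    rw [mem_ball, Complex.dist_eq] at this
    rw [hF_def]; simp only
    rw [norm_div, Complex.norm_real, Real.norm_of_nonneg hr'.le, div_lt_one hr']
    exact this
  have hHlt : ∀ z ∈ ball (0 : ℂ) 1, ‖H z‖ < 1 := fun z hz =>
    abs_bl_lt hw₀' (hFlt z hz)
  have hHmaps : MapsTo H (ball (0:ℂ) 1) (ball (0:ℂ) 1) := by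
    intro z hz
    rw [mem_ball, Complex.dist_eq, sub_zero]
    exact hHlt z hz
  have hFd : ∀ z ∈ ball (0 : ℂ) 1, DifferentiableAt ℂ F z := by
    intro z hz
    have h1 : DifferentiableAt ℂ (fun z : ℂ => z₀ + r * z) z :=
      (differentiableAt_id.const_mul _).const_add _
    have h2 : DifferentiableAt ℂ f (z₀ + r * z) :=
      hf.differentiableAt (hU.mem_nhds (hballU (hτ z hz)))
    exact ((h2.comp z h1).sub_const a').div_const _
  have hHd : ∀ z ∈ ball (0 : ℂ) 1, DifferentiableAt ℂ H z := by
    intro z hz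
    have hne : 1 + (starRingEnd ℂ) (-w₀) * F z ≠ 0 := bl_denom_ne hw₀' (hFlt z hz)
    have : DifferentiableAt ℂ (fun z => (F z + -w₀) / (1 + (starRingEnd ℂ) (-w₀) * F z)) z :=
      ((hFd z hz).add_const _).div (((hFd z hz).const_mul _).const_add 1) hne
    exact this
  have hKlt : ∀ v ∈ ball (0 : ℂ) 1, ‖K v‖ < 1 := by
    intro v hv
    have hvlt : ‖v‖ < 1 := by
      rw [mem_ball, Complex.dist_eq, sub_zero] at hv; exact hv
    have hblv : a' + r' * bl w₀ v ∈ ball a' r' := by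
      rw [mem_ball, dist_self_add_left, norm_mul, Complex.norm_real,
        Real.norm_of_nonneg hr'.le]
      nlinarith [abs_bl_lt hw₀ hvlt, norm_nonneg (bl w₀ v)]
    have := (hgmem _ hblv).1
    rw [mem_ball, Complex.dist_eq] at this
    rw [hK_def]; simp only
    rw [norm_div, Complex.norm_real, Real.norm_of_nonneg hr.le, div_lt_one hr]
    exact this
  have hKmaps : MapsTo K (ball (0:ℂ) 1) (ball (0:ℂ) 1) := by
    intro v hv
    rw [mem_ball, Complex.dist_eq, sub_zero]
    exact hKlt v hv
  have hKd : ∀ v ∈ ball (0 : ℂ) 1, DifferentiableAt ℂ K v := by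
    intro v hv
    have hvlt : ‖v‖ < 1 := by
      rw [mem_ball, Complex.dist_eq, sub_zero] at hv; exact hv
    have hne : 1 + (starRingEnd ℂ) w₀ * v ≠ 0 := bl_denom_ne hw₀ hvlt
    have hbld : DifferentiableAt ℂ (fun v => bl w₀ v) v := by
      have : DifferentiableAt ℂ (fun v : ℂ => (v + w₀) / (1 + (starRingEnd ℂ) w₀ * v)) v :=
        (differentiableAt_id.add_const _).div
          ((differentiableAt_id.const_mul _).const_add 1) hne
      exact this
    have hblv : a' + r' * bl w₀ v ∈ ball a' r' := by
      rw [mem_ball, dist_self_add_left, norm_mul, Complex.norm_real,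
        Real.norm_of_nonneg hr'.le]
      nlinarith [abs_bl_lt hw₀ hvlt, norm_nonneg (bl w₀ v)]
    have h2 : DifferentiableAt ℂ g (a' + r' * bl w₀ v) := hgd _ hblv
    exact (((h2.comp v ((hbld.const_mul _).const_add a')).sub_const z₀).div_const _)
  have hH0 : H 0 = 0 := by
    rw [hH_def]; simp only
    have : F 0 = w₀ := by rw [hF_def]; simp [hw₀_def]
    rw [this, bl]
    simp
  have hKH : ∀ z ∈ ball (0 : ℂ) 1, K (H z) = z := by
    intro z hz
    rw [hH_def, hK_def]; simp only
    rw [bl_bl hw₀ (hFlt z hz)]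
    have h1 : a' + r' * F z = f (z₀ + r * z) := by
      rw [hF_def]; simp only; field_simp; ring
    rw [h1, hginv _ (hτ z hz)]
    field_simp; ring
  have hK0 : K 0 = 0 := by
    have := hKH 0 (mem_ball_self one_pos)
    rwa [hH0] at this
  -- chain rule at 0
  have h0mem : (0 : ℂ) ∈ ball (0 : ℂ) 1 := mem_ball_self one_pos
  have hcd : deriv K 0 * deriv H 0 = 1 := by
    have hev : (K ∘ H) =ᶠ[𝓝 (0:ℂ)] id := by
      filter_upwards [isOpen_ball.mem_nhds h0mem] with z hz using hKH z hz
    have h1 : deriv (K ∘ H) 0 = deriv K (H 0) * deriv H 0 := by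
      apply deriv_comp
      · rw [hH0]; exact hKd 0 h0mem
      · exact hHd 0 h0mem
    rw [hev.deriv_eq, deriv_id] at h1
    rw [hH0] at h1
    exact h1.symm
  -- Schwarz lemma
  have hHdOn : DifferentiableOn ℂ H (ball (0:ℂ) 1) := fun z hz =>
    (hHd z hz).differentiableWithinAt
  have hKdOn : DifferentiableOn ℂ K (ball (0:ℂ) 1) := fun z hz =>
    (hKd z hz).differentiableWithinAt
  have hHmaps' : MapsTo H (ball (0:ℂ) 1) (ball (H 0) 1) := by rw [hH0]; exact hHmaps
  have hKmaps' : MapsTo K (ball (0:ℂ) 1) (ball (K 0) 1) := by rw [hK0]; exact hKmaps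
  have hH1 : ‖deriv H 0‖ ≤ 1 := by
    have := Complex.norm_deriv_le_div_of_mapsTo_ball hHdOn (hHmaps'.mono_right ball_subset_closedBall) one_pos
    simpa using this
  have hK1 : ‖deriv K 0‖ ≤ 1 := by
    have := Complex.norm_deriv_le_div_of_mapsTo_ball hKdOn (hKmaps'.mono_right ball_subset_closedBall) one_pos
    simpa using this
  have hCnorm : ‖deriv H 0‖ = 1 := by
    have hmul : ‖deriv K 0‖ * ‖deriv H 0‖ = 1 := by
      rw [← norm_mul, hcd, norm_one]
    nlinarith [norm_nonneg (deriv K 0), norm_nonneg (deriv H 0)]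
  -- equality case of Schwarz
  set C : ℂ := deriv H 0 with hC_def
  have hCabs : ‖C‖ = 1 := by exact hCnorm
  have hCne : C ≠ 0 := by
    intro h; rw [h] at hCabs; simp at hCabs
  have heqH : ∀ z ∈ ball (0:ℂ) 1, H z = z * C := by
    have heq := Complex.affine_of_mapsTo_ball_of_exists_norm_dslope_eq_div hHdOn (hHmaps'.mono_right ball_subset_closedBall)
      h0mem (by rw [dslope_same]; simpa using hCnorm)
    intro z hz
    have := heq hz
    simpa [hH0, dslope_same, smul_eq_mul] using this
  -- unwind on the ball z₀ r
  set A : ℂ := a' * C * (starRingEnd ℂ) w₀ + r' * C with hA_def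
  set B : ℂ := a' * ((r:ℂ) - C * (starRingEnd ℂ) w₀ * z₀) + (r':ℂ) * ((r:ℂ) * w₀ - C * z₀)
    with hB_def
  set Cc : ℂ := C * (starRingEnd ℂ) w₀ with hCc_def
  set D : ℂ := (r:ℂ) - C * (starRingEnd ℂ) w₀ * z₀ with hD_def
  have hkey : ∀ z ∈ ball z₀ r, (Cc * z + D) * f z - (A * z + B) = 0 := by
    intro z hz
    set u : ℂ := (z - z₀) / r with hu_def
    have hu : u ∈ ball (0:ℂ) 1 := by
      rw [mem_ball, Complex.dist_eq, sub_zero, hu_def, norm_div, Complex.norm_real,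
        Real.norm_of_nonneg hr.le, div_lt_one hr]
      rw [mem_ball, Complex.dist_eq] at hz
      exact hz
    have hτu : z₀ + r * u = z := by rw [hu_def]; field_simp; ring
    have hHu : H u = u * C := heqH u hu
    have hFz : F u = (f z - a') / r' := by rw [hF_def]; simp only [hτu]
    have hFlt' : ‖F u‖ < 1 := hFlt u hu
    have huC : ‖u * C‖ < 1 := by
      rw [norm_mul, hCabs, mul_one]
      rw [mem_ball, Complex.dist_eq, sub_zero] at hu
      exact hu
    -- apply bl w₀ to both sides of H u = u * C
    have hblH : bl w₀ (H u) = F u := by rw [hH_def]; exact bl_bl hw₀ hFlt'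
    have hFeq : F u = bl w₀ (u * C) := by rw [← hblH, hHu]
    have hne2 : 1 + (starRingEnd ℂ) w₀ * (u * C) ≠ 0 := bl_denom_ne hw₀ huC
    rw [hFz, bl] at hFeq
    rw [div_eq_div_iff hr'C hne2] at hFeq
    have hu_mul : u * (r:ℂ) = z - z₀ := by rw [hu_def]; field_simp
    rw [hA_def, hB_def, hCc_def, hD_def]
    linear_combination (r:ℂ) * hFeq + ((r':ℂ) * C - (f z - a') * (starRingEnd ℂ) w₀ * C) * hu_mul
  -- identity theorem
  have hfa : AnalyticOnNhd ℂ f U := hf.analyticOnNhd hU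
  have hPa : AnalyticOnNhd ℂ (fun z => (Cc * z + D) * f z - (A * z + B)) U := by
    have h1 : AnalyticOnNhd ℂ (fun z : ℂ => Cc * z + D) U :=
      (analyticOnNhd_const.mul analyticOnNhd_id).add analyticOnNhd_const
    have h2 : AnalyticOnNhd ℂ (fun z : ℂ => A * z + B) U :=
      (analyticOnNhd_const.mul analyticOnNhd_id).add analyticOnNhd_const
    exact (h1.mul hfa).sub h2
  have hP0 : EqOn (fun z => (Cc * z + D) * f z - (A * z + B)) 0 U := by
    apply hPa.eqOn_zero_of_preconnected_of_eventuallyEq_zero hUc.isPreconnected hz₀U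
    filter_upwards [isOpen_ball.mem_nhds (mem_ball_self hr)] with z hz using hkey z hz
  -- determinant
  have hw₀sq : w₀ * (starRingEnd ℂ) w₀ ≠ 1 := by
    intro h
    have := congrArg norm h
    rw [norm_mul, Complex.norm_conj, norm_one] at this
    nlinarith [norm_nonneg w₀]
  have hdet : A * D - B * Cc ≠ 0 := by
    have : A * D - B * Cc = (r':ℂ) * C * (r:ℂ) * (1 - w₀ * (starRingEnd ℂ) w₀) := by
      rw [hA_def, hB_def, hCc_def, hD_def]; ring
    rw [this]
    apply mul_ne_zero (mul_ne_zero (mul_ne_zero hr'C hCne) hrC)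
    intro h
    apply hw₀sq
    linear_combination -h
  refine ⟨A, B, Cc, D, hdet, ?_⟩
  intro z hzU
  have hPz : (Cc * z + D) * f z - (A * z + B) = 0 := hP0 hzU
  have hden : Cc * z + D ≠ 0 := by
    intro h0
    have hAB : A * z + B = 0 := by
      have := hPz
      rw [h0] at this
      linear_combination -this
    apply hdet
    linear_combination A * h0 - Cc * hAB
  refine ⟨hden, ?_⟩
  rw [eq_div_iff hden]
  linear_combination hPz

end
end

section
/- Let S² be the unit sphere centered at 0 in EuclideanSpace ℝ (Fin 3), regarded as a smooth manifold, and let v ∈ S². Then the stereographic projection from the pole v is conformal at every point x ∈ S² with x ≠ v: its manifold differential (mfderiv) at x, as a linear map from the tangent space of S² at x to the model Euclidean plane, is a nonzero scalar multiple of a linear isometry. -/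
open Metric Manifold

open Submodule ContinuousLinearMap EuclideanGeometry
open scoped RealInnerProductSpace

open Metric Manifold Submodule ContinuousLinearMap EuclideanGeometry
open scoped RealInnerProductSpace

noncomputable section Aux

variable {E : Type*} [NormedAddCommGroup E] [InnerProductSpace ℝ E]

/-- Explicit derivative of `stereoInvFunAux v` at a point `w`. -/
def stereoInvDeriv (v : E) (w : E) : E →L[ℝ] E :=
  ((‖w‖ ^ 2 + 4)⁻¹) • ((4 : ℝ) • ContinuousLinearMap.id ℝ E
      + ((2:ℝ) • innerSL ℝ w).smulRight v)
    + ((-(((‖w‖ ^ 2 + 4) ^ 2)⁻¹)) • ((2:ℝ) • innerSL ℝ w)).smulRight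
        ((4 : ℝ) • w + (‖w‖ ^ 2 - 4) • v)

lemma hasFDerivAt_stereoInvFunAux' (v : E) (w : E) :
    HasFDerivAt (stereoInvFunAux v) (stereoInvDeriv v w) w := by
  have hn : ‖w‖ ^ 2 + 4 ≠ 0 := by positivity
  have h0 : HasFDerivAt (fun y : E => ‖y‖ ^ 2 + 4) ((2:ℝ) • innerSL ℝ w) w := by
    simpa [two_smul, ← Nat.cast_smul_eq_nsmul ℝ] using
      ((hasStrictFDerivAt_norm_sq w).hasFDerivAt).add_const 4
  have h1 : HasFDerivAt (fun y : E => (‖y‖ ^ 2 + 4)⁻¹)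
      ((-(((‖w‖ ^ 2 + 4) ^ 2)⁻¹)) • ((2:ℝ) • innerSL ℝ w)) w := by
    simpa [Function.comp_def] using (hasDerivAt_inv hn).comp_hasFDerivAt w h0
  have h2 : HasFDerivAt (fun y : E => (4 : ℝ) • y + (‖y‖ ^ 2 - 4) • v)
      ((4 : ℝ) • ContinuousLinearMap.id ℝ E + ((2:ℝ) • innerSL ℝ w).smulRight v) w := by
    have ha : HasFDerivAt (fun y : E => (4 : ℝ) • y)
        ((4 : ℝ) • ContinuousLinearMap.id ℝ E) w :=
      (hasFDerivAt_id w).const_smul (4:ℝ)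
    have hb : HasFDerivAt (fun y : E => (‖y‖ ^ 2 - 4) • v)
        (((2:ℝ) • innerSL ℝ w).smulRight v) w := by
      have : HasFDerivAt (fun y : E => ‖y‖ ^ 2 - 4) ((2:ℝ) • innerSL ℝ w) w := by
        simpa [two_smul, ← Nat.cast_smul_eq_nsmul ℝ] using
          ((hasStrictFDerivAt_norm_sq w).hasFDerivAt).sub_const 4
      exact this.smul_const v
    exact ha.add hb
  exact h1.smul h2

lemma stereoInvDeriv_apply (v w u : E) :
    stereoInvDeriv v w u
      = (‖w‖ ^ 2 + 4)⁻¹ • ((4 : ℝ) • u + (2 * ⟪w, u⟫) • v)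
        + (-(((‖w‖ ^ 2 + 4) ^ 2)⁻¹) * (2 * ⟪w, u⟫)) • ((4 : ℝ) • w + (‖w‖ ^ 2 - 4) • v) := by
  simp [stereoInvDeriv, smul_smul, mul_assoc]

lemma isConformalMap_stereoInvDeriv_comp {v : E} (hv : ‖v‖ = 1) (w : (ℝ ∙ v)ᗮ) :
    IsConformalMap ((stereoInvDeriv v (w : E)).comp (ℝ ∙ v)ᗮ.subtypeL) := by
  rw [isConformalMap_iff]
  have hn : (0:ℝ) < ‖(w:E)‖ ^ 2 + 4 := by positivity
  refine ⟨16 * ((‖(w:E)‖ ^ 2 + 4) ^ 2)⁻¹, by positivity, fun u u' => ?_⟩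
  have hvw : ⟪v, (w : E)⟫ = 0 := Submodule.mem_orthogonal_singleton_iff_inner_right.mp w.2
  have hvu : ⟪v, (u : E)⟫ = 0 := Submodule.mem_orthogonal_singleton_iff_inner_right.mp u.2
  have hvu' : ⟪v, (u' : E)⟫ = 0 := Submodule.mem_orthogonal_singleton_iff_inner_right.mp u'.2
  have hwv : ⟪(w : E), v⟫ = 0 := by rw [real_inner_comm]; exact hvw
  have huv : ⟪(u : E), v⟫ = 0 := by rw [real_inner_comm]; exact hvu
  have hu'v : ⟪(u' : E), v⟫ = 0 := by rw [real_inner_comm]; exact hvu'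
  have hu'w : ⟪(u' : E), (w : E)⟫ = ⟪(w:E), (u':E)⟫ := real_inner_comm _ _
  have huw : ⟪(u : E), (w : E)⟫ = ⟪(w:E), (u:E)⟫ := real_inner_comm _ _
  have hvv : ⟪v, v⟫ = 1 := by rw [real_inner_self_eq_norm_sq, hv]; norm_num
  have hww : ⟪(w:E), (w:E)⟫ = ‖(w:E)‖ ^ 2 := real_inner_self_eq_norm_sq _
  simp only [ContinuousLinearMap.comp_apply, Submodule.subtypeL_apply, stereoInvDeriv_apply,
    Submodule.coe_inner, inner_add_left, inner_add_right, inner_smul_left, inner_smul_right,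
    real_inner_smul_left, real_inner_smul_right, hvw, hvu, hvu', hwv, huv, hu'v, hu'w, huw,
    hvv, hww, conj_trivial]
  field_simp
  ring

lemma coe_stereoToFun_eq_inversion {v : E} (hv : ‖v‖ = 1) {y : E} (hy : ‖y‖ = 1)
    (hne : y ≠ v) :
    ((stereoToFun v y : (ℝ ∙ v)ᗮ) : E) = (2 : ℝ) • inversion v (Real.sqrt 2) y := by
  have ht : ⟪v, y⟫ < 1 := by
    rw [inner_lt_one_iff_real_of_norm_eq_one hv hy]
    exact fun h => hne h.symm
  have h1t : (1 : ℝ) - ⟪v, y⟫ ≠ 0 := by linarith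
  have hproj : ((orthogonalProjection (ℝ ∙ v)ᗮ y : (ℝ ∙ v)ᗮ) : E) = y - ⟪v, y⟫ • v := by
    have hsplit := Submodule.starProjection_add_starProjection_orthogonal (K := ℝ ∙ v) y
    have h1 : (ℝ ∙ v).starProjection y = ⟪v, y⟫ • v := by
      rw [Submodule.starProjection_unit_singleton ℝ hv y]
    rw [h1] at hsplit
    exact eq_sub_of_add_eq' hsplit
  have hdist : dist y v ^ 2 = 2 - 2 * ⟪v, y⟫ := by
    rw [dist_eq_norm, @norm_sub_sq_real, hy, hv, real_inner_comm]
    ring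
  have hd : (Real.sqrt 2 / dist y v) ^ 2 = (1 - ⟪v, y⟫)⁻¹ := by
    have h2t : (2:ℝ) - 2 * ⟪v, y⟫ ≠ 0 := by linarith
    rw [div_pow, Real.sq_sqrt (by norm_num : (0:ℝ) ≤ 2), hdist]
    field_simp
  rw [stereoToFun_apply, inversion_def]
  simp only [vsub_eq_sub, vadd_eq_add, Submodule.coe_smul, hproj, hd, innerSL_apply_apply]
  match_scalars
  · field_simp
  · field_simp
    ring

lemma IsConformalMap.of_subtypeL_comp {X : Type*} [NormedAddCommGroup X]
    [InnerProductSpace ℝ X] {s : Submodule ℝ E} {f : X →L[ℝ] s}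
    (h : IsConformalMap (s.subtypeL.comp f)) : IsConformalMap f := by
  rw [isConformalMap_iff] at h ⊢
  obtain ⟨c, hc, h⟩ := h
  exact ⟨c, hc, fun u u' => by simpa [Submodule.coe_inner] using h u u'⟩

end Aux

set_option maxHeartbeats 1000000 in
/-- The stereographic projection from a pole `v` of the unit sphere in `ℝ³` is
conformal at every point `x ≠ v`: its manifold differential is a (nonzero) conformal
linear map from the tangent space to the sphere at `x` to the plane `(ℝ ∙ v)ᗮ`. -/
theorem isConformalMap_mfderiv_stereographic
    (v x : sphere (0 : EuclideanSpace ℝ (Fin 3)) 1) (hx : x ≠ v) :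
    IsConformalMap (X := EuclideanSpace ℝ (Fin 2))
      (Y := (ℝ ∙ (v : EuclideanSpace ℝ (Fin 3)))ᗮ)
      (mfderiv (𝓡 2) 𝓘(ℝ, (ℝ ∙ (v : EuclideanSpace ℝ (Fin 3)))ᗮ)
        (stereographic (norm_eq_of_mem_sphere v)) x) := by
  set E := EuclideanSpace ℝ (Fin 3) with hE
  have hv : ‖(v : E)‖ = 1 := norm_eq_of_mem_sphere v
  have hxv : (x : E) ≠ (v : E) := fun h => hx (Subtype.ext h)
  have hpole : ‖((-x : sphere (0:E) 1) : E)‖ = 1 := norm_eq_of_mem_sphere (-x)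
  haveI : Fact (Module.finrank ℝ E = 2 + 1) := Fact.mk (by show Module.finrank ℝ (EuclideanSpace ℝ (Fin 3)) = 2 + 1; exact finrank_euclideanSpace_fin)
  set U := (OrthonormalBasis.fromOrthogonalSpanSingleton (𝕜 := ℝ) 2
    (ne_zero_of_mem_unit_sphere (-x))).repr with hU
  set y0 : EuclideanSpace ℝ (Fin 2) := chartAt (EuclideanSpace ℝ (Fin 2)) x x with hy0
  set G : EuclideanSpace ℝ (Fin 2) → E :=
    fun z => stereoInvFunAux ((-x : sphere (0:E) 1) : E) ((U.symm z : E)) with hG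
  have hGchart : ∀ z, G z = ((chartAt (EuclideanSpace ℝ (Fin 2)) x).symm z : E) := fun z => rfl
  have hxmem : x ∈ (chartAt (EuclideanSpace ℝ (Fin 2)) x).source :=
    mem_chart_source _ x
  have hGy0 : G y0 = (x : E) := by
    rw [hGchart, hy0]
    exact congrArg _ ((chartAt (EuclideanSpace ℝ (Fin 2)) x).left_inv hxmem)
  set w0 : (ℝ ∙ ((-x : sphere (0:E) 1) : E))ᗮ := U.symm y0 with hw0
  -- derivative of G
  set DG : EuclideanSpace ℝ (Fin 2) →L[ℝ] E :=
    ((stereoInvDeriv ((-x : sphere (0:E) 1) : E) (w0 : E)).comp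
        (ℝ ∙ ((-x : sphere (0:E) 1) : E))ᗮ.subtypeL).comp
      (U.symm.toContinuousLinearEquiv : EuclideanSpace ℝ (Fin 2) →L[ℝ] _) with hDG
  have hGderiv : HasFDerivAt G DG y0 := by
    have hsub : HasFDerivAt
        (stereoInvFunAux ((-x : sphere (0:E) 1) : E) ∘
          (Subtype.val : (ℝ ∙ ((-x : sphere (0:E) 1) : E))ᗮ → E))
        ((stereoInvDeriv ((-x : sphere (0:E) 1) : E) (w0 : E)).comp
          (ℝ ∙ ((-x : sphere (0:E) 1) : E))ᗮ.subtypeL) w0 :=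
      (hasFDerivAt_stereoInvFunAux' _ (w0 : E)).comp w0
        (ℝ ∙ ((-x : sphere (0:E) 1) : E))ᗮ.subtypeL.hasFDerivAt
    exact hsub.comp y0 U.symm.toContinuousLinearEquiv.hasFDerivAt
  have hDGconf : IsConformalMap DG := by
    refine (isConformalMap_stereoInvDeriv_comp hpole w0).comp ?_
    rw [isConformalMap_iff]
    exact ⟨1, one_pos, fun u u' => by
      rw [one_mul]; exact U.symm.inner_map_map u u'⟩
  -- derivative of the scaled inversion
  set Dinv : E →L[ℝ] E :=
    (2 : ℝ) • (((Real.sqrt 2 / dist (x : E) (v : E)) ^ 2) •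
      (reflection (ℝ ∙ ((x : E) - (v : E)))ᗮ : E →L[ℝ] E)) with hDinv
  have hinv : HasFDerivAt (fun y => (2:ℝ) • inversion (v : E) (Real.sqrt 2) y) Dinv (x : E) :=
    (hasFDerivAt_inversion hxv).const_smul (2:ℝ)
  have hDinvconf : IsConformalMap Dinv := by
    have hrefl : IsConformalMap (reflection (ℝ ∙ ((x : E) - (v : E)))ᗮ : E →L[ℝ] E) := by
      rw [isConformalMap_iff]
      exact ⟨1, one_pos, fun u u' => by simp [LinearIsometryEquiv.inner_map_map]⟩
    have hd : dist (x : E) (v : E) ≠ 0 := dist_ne_zero.2 hxv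
    have hc : (Real.sqrt 2 / dist (x : E) (v : E)) ^ 2 ≠ 0 := by
      apply pow_ne_zero
      exact div_ne_zero (Real.sqrt_ne_zero'.2 (by norm_num)) hd
    exact (hrefl.smul hc).smul (by norm_num : (2:ℝ) ≠ 0)
  -- G maps into the sphere
  have hGsph : ∀ z, ‖G z‖ = 1 := fun z =>
    mem_sphere_zero_iff_norm.mp (stereoInvFunAux_mem hpole (U.symm z).2)
  have hGcont : Continuous G :=
    (contDiff_stereoInvFunAux (m := 0)).continuous.comp (continuous_subtype_val.comp U.symm.continuous)
  -- the composite and its derivative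
  set F : EuclideanSpace ℝ (Fin 2) → (ℝ ∙ (v : E))ᗮ := fun z => stereoToFun (v : E) (G z)
    with hF
  have hvalF : HasFDerivAt (fun z => ((F z : E))) (Dinv.comp DG) y0 := by
    have hcomp : HasFDerivAt (fun z => (2:ℝ) • inversion (v : E) (Real.sqrt 2) (G z))
        (Dinv.comp DG) y0 := by
      have hinv' : HasFDerivAt (fun y => (2:ℝ) • inversion (v : E) (Real.sqrt 2) y)
          Dinv (G y0) := by rw [hGy0]; exact hinv
      exact hinv'.comp y0 hGderiv
    refine hcomp.congr_of_eventuallyEq ?_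
    have hne : ∀ᶠ z in nhds y0, G z ≠ (v : E) := by
      apply hGcont.continuousAt.eventually_ne
      rw [hGy0]; exact hxv
    filter_upwards [hne] with z hz
    exact coe_stereoToFun_eq_inversion hv (hGsph z) hz
  have hFderiv : HasFDerivAt F
      ((orthogonalProjection (ℝ ∙ (v : E))ᗮ).comp (Dinv.comp DG)) y0 := by
    have h := (orthogonalProjection (ℝ ∙ (v : E))ᗮ).hasFDerivAt.comp y0 hvalF
    refine h.congr_of_eventuallyEq (Filter.Eventually.of_forall fun z => ?_)
    exact (orthogonalProjection_mem_subspace_eq_self (F z)).symm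
  have huniq : (ℝ ∙ (v : E))ᗮ.subtypeL.comp
      ((orthogonalProjection (ℝ ∙ (v : E))ᗮ).comp (Dinv.comp DG)) = Dinv.comp DG := by
    have h2 : HasFDerivAt (fun z => ((F z : E)))
        ((ℝ ∙ (v : E))ᗮ.subtypeL.comp
          ((orthogonalProjection (ℝ ∙ (v : E))ᗮ).comp (Dinv.comp DG))) y0 :=
      (ℝ ∙ (v : E))ᗮ.subtypeL.hasFDerivAt.comp y0 hFderiv
    exact h2.unique hvalF
  have hconfF : IsConformalMap ((orthogonalProjection (ℝ ∙ (v : E))ᗮ).comp (Dinv.comp DG)) :=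
    IsConformalMap.of_subtypeL_comp (by rw [huniq]; exact hDinvconf.comp hDGconf)
  -- identification of F with the chart-written stereographic projection
  have hfun : (fun z => stereographic (norm_eq_of_mem_sphere v)
      ((chartAt (EuclideanSpace ℝ (Fin 2)) x).symm z)) = F := rfl
  -- mdifferentiability
  have hmd : MDifferentiableAt (𝓡 2) 𝓘(ℝ, (ℝ ∙ (v : E))ᗮ)
      (stereographic (norm_eq_of_mem_sphere v)) x := by
    rw [mdifferentiableAt_iff]
    constructor
    · apply (stereographic (norm_eq_of_mem_sphere v)).continuousAt
      rw [stereographic_source]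
      simpa using hx
    · simp only [writtenInExtChartAt, extChartAt, OpenPartialHomeomorph.extend,
        modelWithCornersSelf_partialEquiv, PartialEquiv.trans_refl,
        differentiableWithinAt_univ, mfld_simps]
      exact hFderiv.differentiableAt
  rw [hmd.mfderiv]
  simp only [writtenInExtChartAt, extChartAt, OpenPartialHomeomorph.extend,
    modelWithCornersSelf_partialEquiv, PartialEquiv.trans_refl, fderivWithin_univ, chartAt_self_eq, mfld_simps]
  rw [show (fderiv ℝ (stereographic (norm_eq_of_mem_sphere v) ∘
      (chartAt (EuclideanSpace ℝ (Fin 2)) x).symm) (chartAt (EuclideanSpace ℝ (Fin 2)) x x))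
      = fderiv ℝ F y0 from rfl]
  rw [hFderiv.fderiv]
  exact hconfF
end
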